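/- Let G = (V,E) be a perfect graph with node weights w ∈ ℝ_+^V and edge weights satisfying w_{ij} ≥ max{w_i, w_j} for all edges ij ∈ E. Then rk_H(G,w) ≤ ω(G), where ω(G) is the maximum size of a clique in G. Moreover, in the unweighted case (w all-ones, all edge weights 1), if G is in addition vertex-transitive then rk_H(G) = ω(G). -/

import Mathlib

set_option linter.unusedSectionVars false
set_option linter.unusedVariables false

open MvPolynomial Finset

noncomputable def handTerm {V : Type*} [DecidableEq V] (T I : Finset V) : MvPolynomial V ℝ :=
  (∏ i ∈ I, X i) * ∏ j ∈ T \ I, (1 - X j)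

def InHandelman {V : Type*} [Fintype V] [DecidableEq V] (t : ℕ)
    (p : MvPolynomial V ℝ) : Prop :=
  ∃ c : Finset V → Finset V → ℝ,
    (∀ T I, 0 ≤ c T I) ∧
    p = ∑ T ∈ Finset.univ.filter (fun T : Finset V => T.card ≤ t),
          ∑ I ∈ T.powerset, C (c T I) * handTerm T I

open Classical in
noncomputable def pGW {V : Type*} [Fintype V] (G : SimpleGraph V)
    (w : V → ℝ) (W : V → V → ℝ) : MvPolynomial V ℝ :=
  (∑ i, C (w i) * X i) -
    C (2⁻¹ : ℝ) * ∑ q ∈ Finset.univ.filter (fun q : V × V => G.Adj q.1 q.2),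
      C (W q.1 q.2) * (X q.1 * X q.2)

noncomputable def alphaW {V : Type*} (G : SimpleGraph V) (w : V → ℝ) : ℝ :=
  sSup {v : ℝ | ∃ S : Finset V, (∀ i ∈ S, ∀ j ∈ S, ¬ G.Adj i j) ∧ v = ∑ i ∈ S, w i}

-- The clique number `ω(G)`: the maximum cardinality of a clique of `G`.
open Classical in
noncomputable def cliqueNumber' {V : Type*} [Fintype V] (G : SimpleGraph V) : ℕ :=
  Finset.sup
    (Finset.univ.filter fun Cq : Finset V => ∀ i ∈ Cq, ∀ j ∈ Cq, i ≠ j → G.Adj i j)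
    Finset.card

/-- `G` is perfect: every induced subgraph `H` satisfies `χ(H) = ω(H)`. -/
def IsPerfect {V : Type*} [Fintype V] [DecidableEq V] (G : SimpleGraph V) : Prop :=
  ∀ s : Finset V,
    (G.induce (↑s : Set V)).chromaticNumber = (cliqueNumber' (G.induce (↑s : Set V)) : ℕ∞)

/-! ### Basic vocabulary -/

section Basic

variable {V : Type*}

/-- stable (independent) set -/
def IsStab (G : SimpleGraph V) (S : Finset V) : Prop := ∀ i ∈ S, ∀ j ∈ S, ¬ G.Adj i j

/-- clique (as a finset) -/
def IsClq (G : SimpleGraph V) (Q : Finset V) : Prop := ∀ i ∈ Q, ∀ j ∈ Q, i ≠ j → G.Adj i j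

lemma isStab_empty (G : SimpleGraph V) : IsStab G ∅ := by intro i hi; simp at hi

variable [Fintype V]

lemma IsClq.card_le {G : SimpleGraph V} {Q : Finset V} (h : IsClq G Q) :
    Q.card ≤ cliqueNumber' G := by
  classical
  refine Finset.le_sup (f := Finset.card) ?_
  simp only [Finset.mem_filter, Finset.mem_univ, true_and]
  exact h

lemma exists_clique_card_eq (G : SimpleGraph V) :
    ∃ Q : Finset V, IsClq G Q ∧ Q.card = cliqueNumber' G := by
  classical
  obtain ⟨Q, hQ, hcard⟩ := Finset.exists_mem_eq_sup
    (Finset.univ.filter fun Cq : Finset V => ∀ i ∈ Cq, ∀ j ∈ Cq, i ≠ j → G.Adj i j)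
    ⟨∅, by simp⟩ Finset.card
  simp only [Finset.mem_filter, Finset.mem_univ, true_and] at hQ
  exact ⟨Q, hQ, hcard.symm⟩

lemma stab_inter_clq_card_le {G : SimpleGraph V} {S Q : Finset V} [DecidableEq V]
    (hS : IsStab G S) (hQ : IsClq G Q) : (S ∩ Q).card ≤ 1 := by
  rw [Finset.card_le_one]
  intro a ha b hb
  simp only [Finset.mem_inter] at ha hb
  by_contra hne
  exact hS a ha.1 b hb.1 (hQ a ha.2 b hb.2 hne)

/-- The set whose sup defines `alphaW` -/
lemma alphaW_isGreatest (G : SimpleGraph V) (w : V → ℝ) :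
    IsGreatest {v : ℝ | ∃ S : Finset V, (∀ i ∈ S, ∀ j ∈ S, ¬ G.Adj i j) ∧ v = ∑ i ∈ S, w i}
      (alphaW G w) := by
  classical
  have hfin : {v : ℝ | ∃ S : Finset V, (∀ i ∈ S, ∀ j ∈ S, ¬ G.Adj i j) ∧ v = ∑ i ∈ S, w i}.Finite := by
    have : {v : ℝ | ∃ S : Finset V, (∀ i ∈ S, ∀ j ∈ S, ¬ G.Adj i j) ∧ v = ∑ i ∈ S, w i} ⊆
        Set.range (fun S : Finset V => ∑ i ∈ S, w i) := by
      rintro v ⟨S, _, rfl⟩; exact ⟨S, rfl⟩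
    exact Set.Finite.subset (Set.finite_range _) this
  have hne : {v : ℝ | ∃ S : Finset V, (∀ i ∈ S, ∀ j ∈ S, ¬ G.Adj i j) ∧ v = ∑ i ∈ S, w i}.Nonempty := by
    exact ⟨0, ∅, by simp⟩
  constructor
  · exact Set.Nonempty.csSup_mem hne hfin
  · exact fun v hv => le_csSup (Set.Finite.bddAbove hfin) hv

lemma le_alphaW {G : SimpleGraph V} {w : V → ℝ} {S : Finset V} (hS : IsStab G S) :
    ∑ i ∈ S, w i ≤ alphaW G w :=
  (alphaW_isGreatest G w).2 ⟨S, hS, rfl⟩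

lemma alphaW_mem (G : SimpleGraph V) (w : V → ℝ) :
    ∃ S : Finset V, IsStab G S ∧ alphaW G w = ∑ i ∈ S, w i := by
  obtain ⟨S, hS, h⟩ := (alphaW_isGreatest G w).1
  exact ⟨S, hS, h⟩

lemma alphaW_nonneg (G : SimpleGraph V) {w : V → ℝ} (hw : ∀ v, 0 ≤ w v) :
    0 ≤ alphaW G w := by
  have := le_alphaW (G := G) (w := w) (S := ∅) (isStab_empty G)
  simpa using this

end Basic
section Cone

variable {V : Type*} [Fintype V] [DecidableEq V]

lemma inH_zero (t : ℕ) : InHandelman (V := V) t 0 := by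
  refine ⟨fun _ _ => 0, fun _ _ => le_refl _, ?_⟩
  simp

lemma inH_add {t : ℕ} {p q : MvPolynomial V ℝ} (hp : InHandelman t p) (hq : InHandelman t q) :
    InHandelman t (p + q) := by
  obtain ⟨c, hc, rfl⟩ := hp
  obtain ⟨d, hd, rfl⟩ := hq
  refine ⟨fun T I => c T I + d T I, fun T I => add_nonneg (hc T I) (hd T I), ?_⟩
  rw [← Finset.sum_add_distrib]
  refine Finset.sum_congr rfl fun T _ => ?_
  rw [← Finset.sum_add_distrib]
  refine Finset.sum_congr rfl fun I _ => ?_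
  rw [map_add, add_mul]

lemma inH_smul {t : ℕ} {p : MvPolynomial V ℝ} {a : ℝ} (ha : 0 ≤ a) (hp : InHandelman t p) :
    InHandelman t (C a * p) := by
  obtain ⟨c, hc, rfl⟩ := hp
  refine ⟨fun T I => a * c T I, fun T I => mul_nonneg ha (hc T I), ?_⟩
  rw [Finset.mul_sum]
  refine Finset.sum_congr rfl fun T _ => ?_
  rw [Finset.mul_sum]
  refine Finset.sum_congr rfl fun I _ => ?_
  rw [map_mul, mul_assoc]

lemma inH_sum {t : ℕ} {ι : Type*} (s : Finset ι) (f : ι → MvPolynomial V ℝ)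
    (h : ∀ i ∈ s, InHandelman t (f i)) : InHandelman t (∑ i ∈ s, f i) := by
  classical
  induction s using Finset.induction_on with
  | empty => simpa using inH_zero t
  | insert _ _ hx ih =>
      rw [Finset.sum_insert hx]
      exact inH_add (h _ (Finset.mem_insert_self _ _))
        (ih fun i hi => h i (Finset.mem_insert_of_mem hi))

lemma inH_term {t : ℕ} {T I : Finset V} (hT : T.card ≤ t) (hI : I ⊆ T) :
    InHandelman t (handTerm T I) := by
  classical
  refine ⟨fun T' I' => if T' = T ∧ I' = I then 1 else 0,
    fun T' I' => by dsimp only; split <;> norm_num, ?_⟩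
  rw [Finset.sum_eq_single T]
  · rw [Finset.sum_eq_single I]
    · simp
    · intro I' _ hne
      simp [hne]
    · intro h
      exact absurd (Finset.mem_powerset.2 hI) h
  · intro T' _ hne
    refine Finset.sum_eq_zero fun I' _ => ?_
    simp [hne]
  · intro h
    exfalso
    refine h ?_
    simp [hT]

lemma inH_mono {t t' : ℕ} (h : t ≤ t') {p : MvPolynomial V ℝ} (hp : InHandelman t p) :
    InHandelman t' p := by
  obtain ⟨c, hc, rfl⟩ := hp
  refine ⟨fun T I => if T.card ≤ t then c T I else 0,
    fun T I => by dsimp only; split; exacts [hc T I, le_refl _], ?_⟩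
  have hsub : (Finset.univ.filter (fun T : Finset V => T.card ≤ t)) ⊆
      (Finset.univ.filter (fun T : Finset V => T.card ≤ t')) :=
    Finset.monotone_filter_right _ (fun T _ hT => le_trans hT h)
  rw [← Finset.sum_subset hsub ?_]
  · refine Finset.sum_congr rfl fun T hT => ?_
    simp only [Finset.mem_filter] at hT
    refine Finset.sum_congr rfl fun I _ => ?_
    dsimp only
    rw [if_pos hT.2]
  · intro T hT hT'
    simp only [Finset.mem_filter, Finset.mem_univ, true_and] at hT hT'
    refine Finset.sum_eq_zero fun I _ => ?_
    dsimp only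
    rw [if_neg hT', map_zero, zero_mul]

end Cone
section Ident

variable {V : Type*} [DecidableEq V]

/-- peel the maximal element w.r.t. an injection into ℕ -/
lemma exists_emax (e : V → ℕ) (he : Function.Injective e) {Q : Finset V} (hQ : Q.Nonempty) :
    ∃ a ∈ Q, ∀ i ∈ Q.erase a, e i < e a := by
  obtain ⟨a, ha, hmax⟩ := Finset.exists_max_image Q e hQ
  refine ⟨a, ha, fun i hi => ?_⟩
  have h1 : i ∈ Q := Finset.mem_of_mem_erase hi
  have h2 : i ≠ a := Finset.ne_of_mem_erase hi
  exact lt_of_le_of_ne (hmax i h1) (fun hh => h2 (he hh))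

lemma prefix_eq (e : V → ℕ) (Q : Finset V) {l a : V} (h : e a < e l) :
    (Q.filter (fun i => e i < e l)).filter (fun i => e i < e a)
      = Q.filter (fun i => e i < e a) := by
  ext i
  simp only [Finset.mem_filter]
  exact ⟨fun ⟨⟨h1, _⟩, h3⟩ => ⟨h1, h3⟩, fun ⟨h1, h3⟩ => ⟨⟨h1, lt_trans h3 h⟩, h3⟩⟩

lemma id2 (e : V → ℕ) (he : Function.Injective e) (A : Finset V) :
    (∏ i ∈ A, ((1 : MvPolynomial V ℝ) - X i)) +
      ∑ l ∈ A, X l * ∏ i ∈ A.filter (fun i => e i < e l), ((1 : MvPolynomial V ℝ) - X i)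
      = (1 : MvPolynomial V ℝ) := by
  classical
  induction A using Finset.strongInductionOn with
  | _ A ih =>
      rcases A.eq_empty_or_nonempty with rfl | hne
      · simp
      obtain ⟨a, ha, hmax⟩ := exists_emax e he hne
      have hins : A = insert a (A.erase a) := (Finset.insert_erase ha).symm
      set A' := A.erase a with hA'
      have hnotmem : a ∉ A' := Finset.notMem_erase a A
      have hss : A' ⊂ A := Finset.erase_ssubset ha
      have hfa : A.filter (fun i => e i < e a) = A' := by
        ext i
        simp only [Finset.mem_filter, hA', Finset.mem_erase]
        constructor
        · rintro ⟨hi, hlt⟩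
          exact ⟨fun hh => absurd hlt (by rw [hh]; exact lt_irrefl _), hi⟩
        · rintro ⟨hne', hi⟩
          exact ⟨hi, hmax i (Finset.mem_erase.2 ⟨hne', hi⟩)⟩
      have hfl : ∀ l ∈ A', A.filter (fun i => e i < e l) = A'.filter (fun i => e i < e l) := by
        intro l hl
        rw [hins, Finset.filter_insert, if_neg]
        · exact fun h => absurd (hmax l hl) (by omega)
      have hsum : ∑ l ∈ A, X l * ∏ i ∈ A.filter (fun i => e i < e l), ((1 : MvPolynomial V ℝ) - X i)
          = X a * (∏ i ∈ A', ((1 : MvPolynomial V ℝ) - X i)) +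
            ∑ l ∈ A', X l * ∏ i ∈ A'.filter (fun i => e i < e l), ((1 : MvPolynomial V ℝ) - X i) := by
        rw [hins, Finset.sum_insert hnotmem, ← hins, hfa]
        congr 1
        refine Finset.sum_congr rfl fun l hl => ?_
        rw [hfl l hl]
      have hprod : (∏ i ∈ A, ((1 : MvPolynomial V ℝ) - X i)) = (1 - X a) * ∏ i ∈ A', ((1 : MvPolynomial V ℝ) - X i) := by
        rw [hins, Finset.prod_insert hnotmem]
      rw [hsum, hprod]
      have := ih A' hss
      linear_combination this

lemma id2' (e : V → ℕ) (he : Function.Injective e) (A : Finset V) :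
    ∑ l ∈ A, X l * ∏ i ∈ A.filter (fun i => e i < e l), ((1 : MvPolynomial V ℝ) - X i)
      = (1 : MvPolynomial V ℝ) - ∏ i ∈ A, ((1 : MvPolynomial V ℝ) - X i) := by
  linear_combination id2 e he A

/-- inner telescoping with global prefix sets -/
lemma id2'' (e : V → ℕ) (he : Function.Injective e) (Q : Finset V) (l : V) :
    ∑ a ∈ Q.filter (fun a => e a < e l),
        X a * ∏ i ∈ Q.filter (fun i => e i < e a), ((1 : MvPolynomial V ℝ) - X i)
      = (1 : MvPolynomial V ℝ) - ∏ i ∈ Q.filter (fun i => e i < e l), ((1 : MvPolynomial V ℝ) - X i) := by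
  classical
  rw [← id2' e he (Q.filter (fun i => e i < e l))]
  refine Finset.sum_congr rfl fun a ha => ?_
  simp only [Finset.mem_filter] at ha
  rw [prefix_eq e Q ha.2]

lemma pairs_insert (e : V → ℕ) {m0 : V} {Q' : Finset V} (hm : m0 ∉ Q')
    (hmax : ∀ i ∈ Q', e i < e m0) :
    ((insert m0 Q') ×ˢ (insert m0 Q')).filter (fun p => e p.1 < e p.2)
      = ((Q' ×ˢ Q').filter (fun p => e p.1 < e p.2)) ∪ Q'.image (fun l => (l, m0)) := by
  ext p
  simp only [Finset.mem_filter, Finset.mem_product, Finset.mem_insert, Finset.mem_union,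
    Finset.mem_image, Prod.ext_iff]
  constructor
  · rintro ⟨⟨h1, h2⟩, hlt⟩
    rcases h1 with h1 | h1
    · rcases h2 with h2 | h2
      · exfalso; rw [h1, h2] at hlt; exact lt_irrefl _ hlt
      · exfalso; rw [h1] at hlt; exact absurd (hmax _ h2) (by omega)
    · rcases h2 with h2 | h2
      · exact Or.inr ⟨p.1, h1, rfl, h2.symm⟩
      · exact Or.inl ⟨⟨h1, h2⟩, hlt⟩
  · rintro (⟨⟨h1, h2⟩, hlt⟩ | ⟨l, hl, hel, hem⟩)
    · exact ⟨⟨Or.inr h1, Or.inr h2⟩, hlt⟩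
    · refine ⟨⟨Or.inr (hel ▸ hl), Or.inl hem.symm⟩, ?_⟩
      rw [← hel, ← hem]
      exact hmax l hl

lemma id1 (e : V → ℕ) (he : Function.Injective e) (Q : Finset V) :
    (C 1 : MvPolynomial V ℝ) - (∑ i ∈ Q, X i) +
        ∑ p ∈ (Q ×ˢ Q).filter (fun p => e p.1 < e p.2), X p.1 * X p.2
      = (∏ i ∈ Q, ((1 : MvPolynomial V ℝ) - X i)) +
        ∑ p ∈ (Q ×ˢ Q).filter (fun p => e p.1 < e p.2),
          ∑ a ∈ Q.filter (fun a => e a < e p.1),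
            (X a * X p.1 * X p.2) * ∏ i ∈ Q.filter (fun i => e i < e a), ((1 : MvPolynomial V ℝ) - X i) := by
  classical
  induction Q using Finset.strongInductionOn with
  | _ Q ih =>
      rcases Q.eq_empty_or_nonempty with rfl | hne
      · simp
      obtain ⟨m0, hm0, hmax0⟩ := exists_emax e he hne
      have hins : Q = insert m0 (Q.erase m0) := (Finset.insert_erase hm0).symm
      set Q' := Q.erase m0 with hQ'
      have hnotmem : m0 ∉ Q' := Finset.notMem_erase m0 Q
      have hmax : ∀ i ∈ Q', e i < e m0 := fun i hi => hmax0 i hi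
      have hss : Q' ⊂ Q := Finset.erase_ssubset hm0
      rw [hins, pairs_insert e hnotmem hmax]
      have hdisj : Disjoint ((Q' ×ˢ Q').filter (fun p => e p.1 < e p.2))
          (Q'.image (fun l => (l, m0))) := by
        rw [Finset.disjoint_left]
        rintro p hp hp'
        simp only [Finset.mem_filter, Finset.mem_product] at hp
        simp only [Finset.mem_image] at hp'
        obtain ⟨l, hl, rfl⟩ := hp'
        exact hnotmem hp.1.2
      have hinj : ∀ x ∈ Q', ∀ y ∈ Q', (fun l => (l, m0)) x = (fun l => (l, m0)) y → x = y :=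
        fun x _ y _ h => (Prod.ext_iff.1 h).1
      -- prefix sets don't see m0
      have hpref : ∀ a : V, e a < e m0 →
          (insert m0 Q').filter (fun i => e i < e a) = Q'.filter (fun i => e i < e a) := by
        intro a hh
        rw [Finset.filter_insert, if_neg (by omega)]
      rw [Finset.sum_union hdisj, Finset.sum_union hdisj, Finset.sum_image hinj,
        Finset.sum_image hinj, Finset.sum_insert hnotmem, Finset.prod_insert hnotmem]
      -- rewrite all prefix filters in the old-pairs part
      have hold : ∑ p ∈ (Q' ×ˢ Q').filter (fun p => e p.1 < e p.2),
            ∑ a ∈ (insert m0 Q').filter (fun a => e a < e p.1),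
              (X a * X p.1 * X p.2) * ∏ i ∈ (insert m0 Q').filter (fun i => e i < e a), ((1 : MvPolynomial V ℝ) - X i)
          = ∑ p ∈ (Q' ×ˢ Q').filter (fun p => e p.1 < e p.2),
            ∑ a ∈ Q'.filter (fun a => e a < e p.1),
              (X a * X p.1 * X p.2) * ∏ i ∈ Q'.filter (fun i => e i < e a), ((1 : MvPolynomial V ℝ) - X i) := by
        refine Finset.sum_congr rfl fun p hp => ?_
        simp only [Finset.mem_filter, Finset.mem_product] at hp
        rw [hpref p.1 (hmax _ hp.1.1)]
        refine Finset.sum_congr rfl fun a ha => ?_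
        simp only [Finset.mem_filter] at ha
        rw [hpref a (lt_trans ha.2 (hmax _ hp.1.1))]
      have hnew : ∑ l ∈ Q',
            ∑ a ∈ (insert m0 Q').filter (fun a => e a < e l),
              (X a * X l * X m0) * ∏ i ∈ (insert m0 Q').filter (fun i => e i < e a), ((1 : MvPolynomial V ℝ) - X i)
          = (∑ l ∈ Q', X l * X m0) -
              X m0 * ((1 : MvPolynomial V ℝ) - ∏ i ∈ Q', ((1 : MvPolynomial V ℝ) - X i)) := by
        have hstep : ∀ l ∈ Q',
            ∑ a ∈ (insert m0 Q').filter (fun a => e a < e l),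
              (X a * X l * X m0) * ∏ i ∈ (insert m0 Q').filter (fun i => e i < e a), ((1 : MvPolynomial V ℝ) - X i)
            = X l * X m0 * ((1 : MvPolynomial V ℝ)
                - ∏ i ∈ Q'.filter (fun i => e i < e l), ((1 : MvPolynomial V ℝ) - X i)) := by
          intro l hl
          rw [hpref l (hmax _ hl)]
          rw [← id2'' e he Q' l, Finset.mul_sum]
          refine Finset.sum_congr rfl fun a ha => ?_
          simp only [Finset.mem_filter] at ha
          rw [hpref a (lt_trans ha.2 (hmax _ hl))]
          ring
        rw [Finset.sum_congr rfl hstep]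
        have hexp : ∑ l ∈ Q', X l * X m0 * ((1 : MvPolynomial V ℝ)
              - ∏ i ∈ Q'.filter (fun i => e i < e l), ((1 : MvPolynomial V ℝ) - X i))
            = (∑ l ∈ Q', X l * X m0)
              - X m0 * ∑ l ∈ Q', X l * ∏ i ∈ Q'.filter (fun i => e i < e l), ((1 : MvPolynomial V ℝ) - X i) := by
          rw [Finset.mul_sum, ← Finset.sum_sub_distrib]
          refine Finset.sum_congr rfl fun l _ => ?_
          ring
        rw [hexp, id2' e he Q']
      rw [hold, hnew]
      have := ih Q' hss
      linear_combination this
  done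

end Ident
section GQ

variable {V : Type*} [Fintype V] [DecidableEq V]

lemma prod_inH_eq_handTerm (Q : Finset V) :
    (∏ i ∈ Q, ((1 : MvPolynomial V ℝ) - X i)) = handTerm Q ∅ := by
  rw [handTerm]
  simp

lemma triple_eq_handTerm {e : V → ℕ} (he : Function.Injective e) (Q : Finset V)
    {a l m : V} (ha : a ∈ Q) (hl : l ∈ Q) (hm : m ∈ Q)
    (hal : e a < e l) (hlm : e l < e m) :
    (X a * X l * X m) * ∏ i ∈ Q.filter (fun i => e i < e a), ((1 : MvPolynomial V ℝ) - X i)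
      = handTerm (insert a (insert l ({m} : Finset V)) ∪ Q.filter (fun i => e i < e a))
          (insert a (insert l ({m} : Finset V))) := by
  have ham : e a < e m := lt_trans hal hlm
  have hane : a ≠ l := fun h => by rw [h] at hal; exact lt_irrefl _ hal
  have hanem : a ≠ m := fun h => by rw [h] at ham; exact lt_irrefl _ ham
  have hlnem : l ≠ m := fun h => by rw [h] at hlm; exact lt_irrefl _ hlm
  rw [handTerm]
  have hIprod : ∏ i ∈ insert a (insert l ({m} : Finset V)), (X i : MvPolynomial V ℝ)
      = X a * X l * X m := by
    rw [Finset.prod_insert (by simp [hane, hanem]), Finset.prod_insert (by simp [hlnem]),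
      Finset.prod_singleton, mul_assoc]
  have hsdiff : (insert a (insert l ({m} : Finset V)) ∪ Q.filter (fun i => e i < e a))
      \ (insert a (insert l ({m} : Finset V))) = Q.filter (fun i => e i < e a) := by
    rw [Finset.union_sdiff_cancel_left]
    rw [Finset.disjoint_left]
    intro x hx hx'
    simp only [Finset.mem_insert, Finset.mem_singleton] at hx
    simp only [Finset.mem_filter] at hx'
    rcases hx with rfl | rfl | rfl
    · exact lt_irrefl _ hx'.2
    · exact absurd hx'.2 (by omega)
    · exact absurd hx'.2 (by omega)
  rw [hIprod, hsdiff]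

lemma gQ_inH {t : ℕ} (e : V → ℕ) (he : Function.Injective e) {G : SimpleGraph V}
    (Q : Finset V) (hQ : Q.card ≤ t) :
    InHandelman t ((C 1 : MvPolynomial V ℝ) - (∑ i ∈ Q, X i) +
      ∑ p ∈ (Q ×ˢ Q).filter (fun p => e p.1 < e p.2), X p.1 * X p.2) := by
  classical
  rw [id1 e he Q]
  refine inH_add ?_ ?_
  · rw [prod_inH_eq_handTerm]
    exact inH_term hQ (Finset.empty_subset _)
  · refine inH_sum _ _ fun p hp => ?_
    refine inH_sum _ _ fun a ha => ?_
    simp only [Finset.mem_filter, Finset.mem_product] at hp ha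
    rw [triple_eq_handTerm he Q ha.1 hp.1.1 hp.1.2 ha.2 hp.2]
    refine inH_term ?_ Finset.subset_union_left
    refine le_trans (Finset.card_le_card ?_) hQ
    intro x hx
    simp only [Finset.mem_union, Finset.mem_insert, Finset.mem_singleton,
      Finset.mem_filter] at hx
    rcases hx with (rfl | rfl | rfl) | hx
    · exact ha.1
    · exact hp.1.1
    · exact hp.1.2
    · exact hx.1

end GQ
section Blowup

variable {V : Type*} [Fintype V] [DecidableEq V]

/-- clique blow-up of `G`: copies of a vertex are mutually adjacent. -/
def Gh (G : SimpleGraph V) : SimpleGraph (V × ℕ) where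
  Adj p q := p ≠ q ∧ (p.1 = q.1 ∨ G.Adj p.1 q.1)
  symm := ⟨by
    rintro p q ⟨h1, h2⟩
    refine ⟨h1.symm, ?_⟩
    rcases h2 with h | h
    · exact Or.inl h.symm
    · exact Or.inr h.symm⟩
  loopless := ⟨fun p h => h.1 rfl⟩

open Classical in
/-- max clique size within a finite subset `B` -/
noncomputable def cwB {α : Type*} (H : SimpleGraph α) (B : Finset α) : ℕ :=
  (B.powerset.filter (fun K => IsClq H K)).sup Finset.card

/-- a proper coloring of `B` with `m` colors -/
def GoodCol {α : Type*} (H : SimpleGraph α) (B : Finset α) (m : ℕ) : Prop :=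
  ∃ c : α → ℕ, (∀ p ∈ B, c p < m) ∧ ∀ p ∈ B, ∀ q ∈ B, H.Adj p q → c p ≠ c q

lemma le_cwB {α : Type*} {H : SimpleGraph α} {B K : Finset α} (hK : K ⊆ B)
    (hclq : IsClq H K) : K.card ≤ cwB H B := by
  classical
  refine Finset.le_sup ?_
  simp only [Finset.mem_filter, Finset.mem_powerset]
  exact ⟨hK, by convert hclq⟩

lemma cwB_exists {α : Type*} (H : SimpleGraph α) (B : Finset α) :
    ∃ K, K ⊆ B ∧ IsClq H K ∧ K.card = cwB H B := by
  classical
  obtain ⟨K, hK, hcard⟩ := Finset.exists_mem_eq_sup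
    (B.powerset.filter (fun K => IsClq H K)) ⟨∅, Finset.mem_filter.2 ⟨Finset.empty_mem_powerset _, by simp [IsClq]⟩⟩ Finset.card
  · simp only [Finset.mem_filter, Finset.mem_powerset] at hK
    exact ⟨K, hK.1, hK.2, hcard.symm⟩

lemma cwB_mono {α : Type*} {H : SimpleGraph α} {B B' : Finset α} (h : B ⊆ B') :
    cwB H B ≤ cwB H B' := by
  obtain ⟨K, hK, hclq, hcard⟩ := cwB_exists H B
  rw [← hcard]
  exact le_cwB (hK.trans h) hclq

lemma cwB_pos {α : Type*} {H : SimpleGraph α} {B : Finset α} {x : α} (hx : x ∈ B) :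
    1 ≤ cwB H B := by
  have : ({x} : Finset α).card ≤ cwB H B := by
    refine le_cwB (by simpa using hx) ?_
    intro a ha b hb hne
    simp only [Finset.mem_singleton] at ha hb
    exact absurd (ha.trans hb.symm) hne
  simpa using this

/-- base case: if `B` contains at most one copy of each vertex, a proper coloring with
`cwB` colors comes from perfection of `G`. -/
lemma bridge (G : SimpleGraph V) (hperf : IsPerfect G) (B : Finset (V × ℕ))
    (hinj : ∀ p ∈ B, ∀ q ∈ B, p.1 = q.1 → p = q) :
    GoodCol (Gh G) B (cwB (Gh G) B) := by
  classical
  set s : Finset V := B.image Prod.fst with hs_def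
  have hcol : (G.induce (↑s : Set V)).Colorable (cliqueNumber' (G.induce (↑s : Set V))) :=
    SimpleGraph.chromaticNumber_le_iff_colorable.mp (le_of_eq (hperf s))
  obtain ⟨col⟩ := hcol
  set N := cliqueNumber' (G.induce (↑s : Set V)) with hN_def
  -- `N ≤ cwB`
  have hNle : N ≤ cwB (Gh G) B := by
    obtain ⟨K, hKclq, hKcard⟩ := exists_clique_card_eq (G.induce (↑s : Set V))
    have hex : ∀ v : (↑s : Set V), ∃! p, p ∈ B ∧ p.1 = ↑v := by
      rintro ⟨v, hv⟩
      simp only [Finset.mem_coe, hs_def, Finset.mem_image] at hv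
      obtain ⟨p, hp, hp1⟩ := hv
      refine ⟨p, ⟨hp, hp1⟩, ?_⟩
      rintro q ⟨hq, hq1⟩
      exact hinj q hq p hp (by rw [hq1, hp1])
    set f : (↑s : Set V) → V × ℕ := fun v => Finset.choose _ B (hex v) with hf_def
    have hfmem : ∀ v, f v ∈ B := fun v => Finset.choose_mem _ B (hex v)
    have hffst : ∀ v, (f v).1 = ↑v := fun v => Finset.choose_property _ B (hex v)
    have hfinj : Function.Injective f := by
      intro u v h
      have : (↑u : V) = ↑v := by rw [← hffst u, ← hffst v, h]
      exact Subtype.ext this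
    refine le_trans ?_ (le_cwB (K := K.image f) (fun p hp => ?_) ?_)
    · rw [Finset.card_image_of_injective _ hfinj, hKcard]
    · simp only [Finset.mem_image] at hp
      obtain ⟨v, _, rfl⟩ := hp
      exact hfmem v
    · intro p hp q hq hne
      simp only [Finset.mem_image] at hp hq
      obtain ⟨u, hu, rfl⟩ := hp
      obtain ⟨v, hv, rfl⟩ := hq
      have huv : u ≠ v := fun h => hne (by rw [h])
      have hadj := hKclq u hu v hv huv
      refine ⟨hne, Or.inr ?_⟩
      rw [hffst u, hffst v]
      exact hadj
  refine ⟨fun p => if h : p.1 ∈ s then (col ⟨p.1, h⟩).val else 0, fun p hp => ?_, ?_⟩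
  · have h1 : p.1 ∈ s := Finset.mem_image_of_mem _ hp
    dsimp only
    rw [dif_pos h1]
    exact lt_of_lt_of_le (col ⟨p.1, h1⟩).isLt hNle
  · intro p hp q hq hadj
    have h1 : p.1 ∈ s := Finset.mem_image_of_mem _ hp
    have h2 : q.1 ∈ s := Finset.mem_image_of_mem _ hq
    dsimp only
    rw [dif_pos h1, dif_pos h2]
    have hfst : p.1 ≠ q.1 := by
      intro h
      exact hadj.1 (hinj p hp q hq h)
    have hGadj : G.Adj p.1 q.1 := by
      rcases hadj.2 with h | h
      · exact absurd h hfst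
      · exact h
    have : col ⟨p.1, h1⟩ ≠ col ⟨q.1, h2⟩ := by
      refine col.valid ?_
      exact hGadj
    exact fun hh => this (Fin.val_injective hh)

lemma claimE (G : SimpleGraph V) (hperf : IsPerfect G) :
    ∀ (n : ℕ) (B : Finset (V × ℕ)), B.card ≤ n → GoodCol (Gh G) B (cwB (Gh G) B) := by
  classical
  intro n
  induction n with
  | zero =>
      intro B hB
      have : B = ∅ := Finset.card_eq_zero.mp (Nat.le_zero.mp hB)
      subst this
      exact ⟨fun _ => 0, fun p hp => absurd hp (Finset.notMem_empty p),
        fun p hp => absurd hp (Finset.notMem_empty p)⟩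
  | succ n ih =>
      intro B hB
      by_cases hinj : ∀ p ∈ B, ∀ q ∈ B, p.1 = q.1 → p = q
      · exact bridge G hperf B hinj
      push_neg at hinj
      obtain ⟨x', hx'B, x, hxB, hfst, hne⟩ := hinj
      set B' := B.erase x' with hB'_def
      have hxB' : x ∈ B' := Finset.mem_erase.2 ⟨fun h => hne h.symm, hxB⟩
      have hx'B' : x' ∉ B' := Finset.notMem_erase _ _
      have hB'card : B'.card ≤ n := by
        rw [hB'_def, Finset.card_erase_of_mem hx'B]
        omega
      obtain ⟨c', hc'lt, hc'val⟩ := ih B' hB'card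
      set ω' := cwB (Gh G) B' with hω'_def
      have hmono : ω' ≤ cwB (Gh G) B := cwB_mono (Finset.erase_subset _ _)
      rcases lt_or_eq_of_le hmono with hlt | heq
      · -- easy case: new color for x'
        refine ⟨fun p => if p = x' then ω' else c' p, fun p hp => ?_, ?_⟩
        · dsimp only
          by_cases h : p = x'
          · rw [if_pos h]; exact hlt
          · rw [if_neg h]
            exact lt_trans (hc'lt p (Finset.mem_erase.2 ⟨h, hp⟩)) hlt
        · intro p hp q hq hadj
          dsimp only
          by_cases h1 : p = x' <;> by_cases h2 : q = x'
          · exact absurd (h1.trans h2.symm) hadj.1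
          · rw [if_pos h1, if_neg h2]
            exact fun hh => absurd hh.symm
              (Nat.ne_of_lt (hc'lt q (Finset.mem_erase.2 ⟨h2, hq⟩)))
          · rw [if_neg h1, if_pos h2]
            exact Nat.ne_of_lt (hc'lt p (Finset.mem_erase.2 ⟨h1, hp⟩))
          · rw [if_neg h1, if_neg h2]
            exact hc'val p (Finset.mem_erase.2 ⟨h1, hp⟩) q (Finset.mem_erase.2 ⟨h2, hq⟩) hadj
      · -- hard case: Lovász recoloring
        have hω'pos : 1 ≤ ω' := cwB_pos hxB'
        -- x is in no maximum clique of B'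
        have hxavoid : ∀ K ⊆ B', IsClq (Gh G) K → K.card = ω' → x ∉ K := by
          intro K hKB hKclq hKcard hxK
          have hclq' : IsClq (Gh G) (insert x' K) := by
            intro a ha b hb hab
            simp only [Finset.mem_insert] at ha hb
            rcases ha with rfl | ha <;> rcases hb with rfl | hb
            · exact absurd rfl hab
            · -- a = x', b ∈ K
              have hbx' : b ≠ a := fun h => hx'B' (h ▸ hKB hb)
              by_cases hbx : b = x
              · subst hbx
                exact ⟨hab, Or.inl hfst⟩
              · have hadj := hKclq x hxK b hb (fun h => hbx h.symm)
                refine ⟨hab, ?_⟩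
                rcases hadj.2 with h | h
                · exact Or.inl (hfst.trans h)
                · exact Or.inr (by rw [hfst]; exact h)
            · -- symmetric
              have hax' : a ≠ b := fun h => hx'B' (h ▸ hKB ha)
              by_cases hax : a = x
              · subst hax
                exact ⟨hab, Or.inl hfst.symm⟩
              · have hadj := hKclq x hxK a ha (fun h => hax h.symm)
                refine ⟨hab, ?_⟩
                rcases hadj.2 with h | h
                · exact Or.inl (h.symm.trans hfst.symm)
                · exact Or.inr (by rw [hfst]; exact h.symm)
            · exact hKclq a ha b hb hab
          have hsub : insert x' K ⊆ B := by
            intro a ha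
            rcases Finset.mem_insert.1 ha with rfl | ha
            · exact hx'B
            · exact (Finset.erase_subset _ _) (hKB ha)
          have hcard : (insert x' K).card = ω' + 1 := by
            rw [Finset.card_insert_of_notMem (fun h => hx'B' (hKB h)), hKcard]
          have := le_cwB hsub hclq'
          rw [hcard, ← heq] at this
          omega
        -- pigeonhole: every maximum clique of B' contains a vertex colored like x
        have hpigeon : ∀ K ⊆ B', IsClq (Gh G) K → K.card = ω' →
            ∃ p ∈ K, c' p = c' x := by
          intro K hKB hKclq hKcard
          have himsub : K.image c' ⊆ Finset.range ω' := by
            intro t ht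
            simp only [Finset.mem_image] at ht
            obtain ⟨p, hp, rfl⟩ := ht
            exact Finset.mem_range.2 (hc'lt p (hKB hp))
          have hcardim : (K.image c').card = ω' := by
            rw [Finset.card_image_of_injOn, hKcard]
            intro p hp q hq hpq
            by_contra hne'
            exact hc'val p (hKB hp) q (hKB hq) (hKclq p hp q hq hne') hpq
          have him : K.image c' = Finset.range ω' := by
            refine Finset.eq_of_subset_of_card_le himsub ?_
            rw [hcardim, Finset.card_range]
          have : c' x ∈ K.image c' := by
            rw [him]
            exact Finset.mem_range.2 (hc'lt x hxB')
          simp only [Finset.mem_image] at this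
          exact this
        set A := B'.filter (fun p => c' p = c' x) with hA_def
        set B'' := B' \ (A.erase x) with hB''_def
        have hB''sub : B'' ⊆ B' := Finset.sdiff_subset
        have hB''card : B''.card ≤ n := le_trans (Finset.card_le_card hB''sub) hB'card
        have hcw'' : cwB (Gh G) B'' < ω' := by
          rcases lt_or_eq_of_le (cwB_mono hB''sub) with h | h
          · exact h
          exfalso
          obtain ⟨K, hKB, hKclq, hKcard⟩ := cwB_exists (Gh G) B''
          rw [h] at hKcard
          obtain ⟨p, hpK, hpc⟩ := hpigeon K (hKB.trans hB''sub) hKclq hKcard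
          have hpx : p ≠ x := fun h => hxavoid K (hKB.trans hB''sub) hKclq hKcard (h ▸ hpK)
          have hpA : p ∈ A.erase x := Finset.mem_erase.2 ⟨hpx,
            Finset.mem_filter.2 ⟨hKB.trans hB''sub hpK, hpc⟩⟩
          have := hKB hpK
          rw [hB''_def, Finset.mem_sdiff] at this
          exact this.2 hpA
        obtain ⟨c'', hc''lt, hc''val⟩ := ih B'' hB''card
        rw [← heq]
        refine ⟨fun p => if p ∈ A.erase x ∨ p = x' then ω' - 1 else c'' p, fun p hp => ?_, ?_⟩
        · dsimp only
          by_cases h : p ∈ A.erase x ∨ p = x'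
          · rw [if_pos h]; omega
          · rw [if_neg h]
            push_neg at h
            have hpB' : p ∈ B' := Finset.mem_erase.2 ⟨h.2, hp⟩
            have hpB'' : p ∈ B'' := by
              rw [hB''_def, Finset.mem_sdiff]
              exact ⟨hpB', h.1⟩
            have := hc''lt p hpB''
            omega
        · intro p hp q hq hadj
          dsimp only
          have hmemB'' : ∀ r ∈ B, ¬(r ∈ A.erase x ∨ r = x') → r ∈ B'' := by
            intro r hr h
            push_neg at h
            rw [hB''_def, Finset.mem_sdiff]
            exact ⟨Finset.mem_erase.2 ⟨h.2, hr⟩, h.1⟩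
          -- adjacency within the special class is impossible
          have hclass : ∀ r ∈ B, ∀ u ∈ B, (r ∈ A.erase x ∨ r = x') →
              (u ∈ A.erase x ∨ u = x') → ¬ (Gh G).Adj r u := by
            intro r hr u hu h1 h2 hadj'
            rcases h1 with h1 | rfl <;> rcases h2 with h2 | rfl
            · -- both in A.erase x : same color class of c'
              have hr' := Finset.mem_of_mem_erase h1
              have hu' := Finset.mem_of_mem_erase h2
              rw [hA_def, Finset.mem_filter] at hr' hu'
              exact hc'val r hr'.1 u hu'.1 hadj' (hr'.2.trans hu'.2.symm)
            · -- r ∈ A.erase x, u = x'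
              have hr' := Finset.mem_of_mem_erase h1
              rw [hA_def, Finset.mem_filter] at hr'
              have hrx : r ≠ x := Finset.ne_of_mem_erase h1
              -- Adj r x' implies Adj r x
              have hadjx : (Gh G).Adj r x := by
                refine ⟨hrx, ?_⟩
                rcases hadj'.2 with h | h
                · exact Or.inl (h.trans hfst)
                · exact Or.inr (by rw [← hfst]; exact h)
              exact hc'val r hr'.1 x hxB' hadjx (hr'.2)
            · -- r = x', u ∈ A.erase x
              have hu' := Finset.mem_of_mem_erase h2
              rw [hA_def, Finset.mem_filter] at hu'
              have hux : u ≠ x := Finset.ne_of_mem_erase h2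
              have hadjx : (Gh G).Adj x u := by
                refine ⟨fun h => hux h.symm, ?_⟩
                rcases hadj'.2 with h | h
                · exact Or.inl (hfst.symm.trans h)
                · exact Or.inr (by rw [← hfst]; exact h)
              exact hc'val x hxB' u hu'.1 hadjx (hu'.2.symm)
            · exact hadj'.1 rfl
          by_cases h1 : p ∈ A.erase x ∨ p = x' <;> by_cases h2 : q ∈ A.erase x ∨ q = x'
          · exact absurd hadj (hclass p hp q hq h1 h2)
          · rw [if_pos h1, if_neg h2]
            have := hc''lt q (hmemB'' q hq h2)
            omega
          · rw [if_neg h1, if_pos h2]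
            have := hc''lt p (hmemB'' p hp h1)
            omega
          · rw [if_neg h1, if_neg h2]
            exact hc''val p (hmemB'' p hp h1) q (hmemB'' q hq h2) hadj

end Blowup
section LemA

variable {V : Type*} [Fintype V] [DecidableEq V]

/-- In a perfect graph with positive max stable weight, some clique of positive-weight
vertices meets every maximum-weight stable set consisting of positive-weight vertices. -/
lemma lemmaA (G : SimpleGraph V) (hperf : IsPerfect G) (w : V → ℝ) (hw : ∀ v, 0 ≤ w v)
    (hα : 0 < alphaW G w) :
    ∃ Q : Finset V, IsClq G Q ∧ (∀ i ∈ Q, 0 < w i) ∧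
      ∀ S : Finset V, IsStab G S → (∀ i ∈ S, 0 < w i) → (∑ i ∈ S, w i = alphaW G w) →
        (S ∩ Q).Nonempty := by
  classical
  set α := alphaW G w with hα_def
  set F : Finset (Finset V) := Finset.univ.filter
    (fun S => IsStab G S ∧ (∀ i ∈ S, 0 < w i) ∧ ∑ i ∈ S, w i = α) with hF_def
  have hF_mem : ∀ {S}, S ∈ F ↔ (IsStab G S ∧ (∀ i ∈ S, 0 < w i) ∧ ∑ i ∈ S, w i = α) := by
    intro S
    simp only [hF_def, Finset.mem_filter, Finset.mem_univ, true_and]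
  have hFne : F.Nonempty := by
    obtain ⟨S, hS, hsum⟩ := alphaW_mem G w
    refine ⟨S.filter (fun i => 0 < w i), hF_mem.2 ⟨?_, ?_, ?_⟩⟩
    · intro i hi j hj
      exact hS i (Finset.mem_of_mem_filter _ hi) j (Finset.mem_of_mem_filter _ hj)
    · intro i hi
      exact (Finset.mem_filter.1 hi).2
    · have : ∑ i ∈ S, w i = ∑ i ∈ S.filter (fun i => 0 < w i), w i := by
        rw [← Finset.sum_filter_add_sum_filter_not S (fun i => 0 < w i)]
        have hzero : ∑ i ∈ S.filter (fun i => ¬ 0 < w i), w i = 0 := by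
          refine Finset.sum_eq_zero fun i hi => ?_
          have := (Finset.mem_filter.1 hi).2
          have := hw i
          linarith
        rw [hzero, add_zero]
      rw [← this, ← hsum]
  by_contra hcon
  push_neg at hcon
  have hcon' : ∀ Q : Finset V, IsClq G Q → (∀ i ∈ Q, 0 < w i) →
      ∃ S ∈ F, S ∩ Q = ∅ := by
    intro Q h1 h2
    obtain ⟨S, hS1, hS2, hS3, hS4⟩ := hcon Q h1 h2
    exact ⟨S, hF_mem.2 ⟨hS1, hS2, hS3⟩, hS4⟩
  set u : V → ℕ := fun i => (F.filter (fun S => i ∈ S)).card with hu_def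
  set B : Finset (V × ℕ) := Finset.univ.biUnion
    (fun i => ({i} : Finset V) ×ˢ Finset.range (u i)) with hB_def
  have hB_mem : ∀ p : V × ℕ, p ∈ B ↔ p.2 < u p.1 := by
    intro p
    simp only [hB_def, Finset.mem_biUnion, Finset.mem_univ, true_and, Finset.mem_product,
      Finset.mem_singleton, Finset.mem_range]
    constructor
    · rintro ⟨i, hi1, hi2⟩
      rw [hi1]
      exact hi2
    · intro h
      exact ⟨p.1, rfl, h⟩
  have hupos : ∀ i, 0 < u i → 0 < w i := by
    intro i hi
    rw [hu_def] at hi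
    rw [Finset.card_pos] at hi
    obtain ⟨S, hS⟩ := hi
    rw [Finset.mem_filter] at hS
    exact (hF_mem.1 hS.1).2.1 i hS.2
  set k := F.card with hk_def
  have hk1 : 1 ≤ k := Finset.card_pos.2 hFne
  -- Step 1: every clique of the blow-up within B has size ≤ k - 1
  have hcw : cwB (Gh G) B ≤ k - 1 := by
    obtain ⟨K, hKB, hKclq, hKcard⟩ := cwB_exists (Gh G) B
    rw [← hKcard]
    set Q := K.image Prod.fst with hQ_def
    have hQclq : IsClq G Q := by
      intro i hi j hj hne
      simp only [hQ_def, Finset.mem_image] at hi hj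
      obtain ⟨p, hp, rfl⟩ := hi
      obtain ⟨q, hq, rfl⟩ := hj
      have hpq : p ≠ q := fun h => hne (by rw [h])
      rcases (hKclq p hp q hq hpq).2 with h | h
      · exact absurd h hne
      · exact h
    have hQpos : ∀ i ∈ Q, 0 < w i := by
      intro i hi
      simp only [hQ_def, Finset.mem_image] at hi
      obtain ⟨p, hp, rfl⟩ := hi
      have := (hB_mem p).1 (hKB hp)
      exact hupos p.1 (by omega)
    obtain ⟨S0, hS0F, hS0Q⟩ := hcon' Q hQclq hQpos
    -- |K| = Σ_{i ∈ Q} #copies ≤ Σ_{i∈Q} u i = Σ_{S∈F} |Q ∩ S| ≤ k-1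
    have h1 : K.card = ∑ i ∈ Q, (K.filter (fun p => p.1 = i)).card :=
      Finset.card_eq_sum_card_fiberwise (fun p hp => Finset.mem_image_of_mem _ hp)
    have h2 : ∀ i ∈ Q, (K.filter (fun p => p.1 = i)).card ≤ u i := by
      intro i _
      have hsub : K.filter (fun p => p.1 = i) ⊆ ({i} : Finset V) ×ˢ Finset.range (u i) := by
        intro p hp
        rw [Finset.mem_filter] at hp
        have := (hB_mem p).1 (hKB hp.1)
        rw [Finset.mem_product, Finset.mem_singleton, Finset.mem_range]
        exact ⟨hp.2, hp.2 ▸ this⟩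
      have := Finset.card_le_card hsub
      rwa [Finset.card_product, Finset.card_singleton, Finset.card_range, one_mul] at this
    have h3 : ∑ i ∈ Q, u i = ∑ S ∈ F, (Q ∩ S).card := by
      have : ∀ i ∈ Q, u i = ∑ S ∈ F, (if i ∈ S then 1 else 0) := by
        intro i _
        rw [hu_def]
        exact Finset.card_filter _ _
      rw [Finset.sum_congr rfl this, Finset.sum_comm]
      refine Finset.sum_congr rfl fun S _ => ?_
      rw [← Finset.sum_filter, Finset.sum_const, smul_eq_mul, mul_one,
        Finset.filter_mem_eq_inter]
    have h4 : ∑ S ∈ F, (Q ∩ S).card ≤ k - 1 := by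
      have hS0 : (Q ∩ S0).card = 0 := by
        rw [Finset.inter_comm, hS0Q, Finset.card_empty]
      have hrest : ∀ S ∈ F.erase S0, (Q ∩ S).card ≤ 1 := by
        intro S hS
        have hSF := Finset.mem_of_mem_erase hS
        rw [Finset.inter_comm]
        exact stab_inter_clq_card_le (hF_mem.1 hSF).1 hQclq
      calc ∑ S ∈ F, (Q ∩ S).card
          = (Q ∩ S0).card + ∑ S ∈ F.erase S0, (Q ∩ S).card :=
            (Finset.add_sum_erase F _ hS0F).symm
        _ ≤ 0 + ∑ S ∈ F.erase S0, 1 := by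
            rw [hS0]
            exact add_le_add le_rfl (Finset.sum_le_sum hrest)
        _ = (F.erase S0).card := by rw [zero_add, Finset.sum_const, smul_eq_mul, mul_one]
        _ = k - 1 := by rw [Finset.card_erase_of_mem hS0F]
    calc K.card = ∑ i ∈ Q, (K.filter (fun p => p.1 = i)).card := h1
      _ ≤ ∑ i ∈ Q, u i := Finset.sum_le_sum h2
      _ = ∑ S ∈ F, (Q ∩ S).card := h3
      _ ≤ k - 1 := h4
  -- Step 2: counting with a proper coloring
  obtain ⟨c, hclt, hcval⟩ := claimE G hperf B.card B le_rfl
  have hclt' : ∀ p ∈ B, c p < k - 1 := fun p hp => lt_of_lt_of_le (hclt p hp) hcw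
  -- total weight of B, counted two ways
  have htot1 : ∑ p ∈ B, w p.1 = (k : ℝ) * α := by
    have h1 : ∑ p ∈ B, w p.1 = ∑ i, ∑ p ∈ ({i} : Finset V) ×ˢ Finset.range (u i), w p.1 := by
      rw [hB_def]
      refine Finset.sum_biUnion ?_
      intro i _ j _ hne
      simp only [Finset.disjoint_left, Finset.mem_product, Finset.mem_singleton]
      rintro p ⟨h1, _⟩ ⟨h2, _⟩
      exact hne (h1 ▸ h2 ▸ rfl)
    have h2 : ∀ i, ∑ p ∈ ({i} : Finset V) ×ˢ Finset.range (u i), w p.1 = (u i : ℝ) * w i := by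
      intro i
      rw [Finset.sum_product, Finset.sum_singleton]
      have hconst : ∀ y ∈ Finset.range (u i), w (i, y).1 = w i := fun y _ => rfl
      rw [Finset.sum_congr rfl hconst, Finset.sum_const, Finset.card_range, nsmul_eq_mul]
    have h3 : ∑ i, (u i : ℝ) * w i = ∑ S ∈ F, ∑ i ∈ S, w i := by
      have : ∀ i : V, (u i : ℝ) * w i = ∑ S ∈ F, (if i ∈ S then w i else 0) := by
        intro i
        rw [← Finset.sum_filter, Finset.sum_const, nsmul_eq_mul, hu_def]
      rw [Finset.sum_congr rfl (fun i _ => this i), Finset.sum_comm]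
      refine Finset.sum_congr rfl fun S _ => ?_
      rw [← Finset.sum_filter, Finset.filter_mem_eq_inter, Finset.univ_inter]
    have h4 : ∑ S ∈ F, ∑ i ∈ S, w i = (k : ℝ) * α := by
      have : ∀ S ∈ F, ∑ i ∈ S, w i = α := fun S hS => (hF_mem.1 hS).2.2
      rw [Finset.sum_congr rfl this, Finset.sum_const, nsmul_eq_mul, hk_def]
    rw [h1, Finset.sum_congr rfl (fun i _ => h2 i), h3, h4]
  have htot2 : ∑ p ∈ B, w p.1 ≤ ((k - 1 : ℕ) : ℝ) * α := by
    have hmaps : ∀ p ∈ B, c p ∈ Finset.range (k - 1) :=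
      fun p hp => Finset.mem_range.2 (hclt' p hp)
    rw [← Finset.sum_fiberwise_of_maps_to hmaps]
    have hclass : ∀ t ∈ Finset.range (k - 1), ∑ p ∈ B.filter (fun p => c p = t), w p.1 ≤ α := by
      intro t _
      set Bt := B.filter (fun p => c p = t) with hBt_def
      have hinj : ∀ p ∈ Bt, ∀ q ∈ Bt, p.1 = q.1 → p = q := by
        intro p hp q hq hfst
        by_contra hne
        rw [hBt_def, Finset.mem_filter] at hp hq
        exact hcval p hp.1 q hq.1 ⟨hne, Or.inl hfst⟩ (hp.2.trans hq.2.symm)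
      have himg : ∑ p ∈ Bt, w p.1 = ∑ i ∈ Bt.image Prod.fst, w i := by
        rw [Finset.sum_image (fun p hp q hq h => hinj p hp q hq h)]
      have hstab : IsStab G (Bt.image Prod.fst) := by
        intro i hi j hj hadj
        simp only [Finset.mem_image] at hi hj
        obtain ⟨p, hp, rfl⟩ := hi
        obtain ⟨q, hq, rfl⟩ := hj
        have hpq : p ≠ q := fun h => (G.loopless.irrefl q.1) (h ▸ hadj)
        rw [hBt_def, Finset.mem_filter] at hp hq
        exact hcval p hp.1 q hq.1 ⟨hpq, Or.inr hadj⟩ (hp.2.trans hq.2.symm)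
      rw [himg]
      exact le_alphaW hstab
    calc ∑ t ∈ Finset.range (k - 1), ∑ p ∈ B.filter (fun p => c p = t), w p.1
        ≤ ∑ t ∈ Finset.range (k - 1), α := Finset.sum_le_sum hclass
      _ = ((k - 1 : ℕ) : ℝ) * α := by rw [Finset.sum_const, Finset.card_range, nsmul_eq_mul]
  rw [htot1] at htot2
  have hcast : ((k - 1 : ℕ) : ℝ) = (k : ℝ) - 1 := by
    have : (1 : ℕ) ≤ k := hk1
    push_cast [this]
    ring
  rw [hcast] at htot2
  nlinarith [htot2, hα]

end LemA
section Key

variable {V : Type*} [Fintype V] [DecidableEq V]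

open Classical in
lemma keyLemma' (G : SimpleGraph V) (hperf : IsPerfect G) :
    ∀ (m : ℕ) (w : V → ℝ), (∀ v, 0 ≤ w v) →
    (Finset.univ.filter (fun i => 0 < w i)).card * (2 ^ (Fintype.card V) + 1) +
      (Finset.univ.filter (fun S : Finset V => IsStab G S ∧ ∑ i ∈ S, w i < alphaW G w)).card
      ≤ m →
    ∃ (k : ℕ) (Q : Fin k → Finset V) (y : Fin k → ℝ),
      (∀ j, IsClq G (Q j)) ∧ (∀ j, 0 ≤ y j) ∧
      (∑ j, y j = alphaW G w) ∧
      (∀ i : V, ∑ j ∈ Finset.univ.filter (fun j => i ∈ Q j), y j = w i) := by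
  classical
  intro m
  induction m using Nat.strong_induction_on with
  | _ m ih =>
  intro w hw hμ
  set N := 2 ^ (Fintype.card V) with hN_def
  set α := alphaW G w with hα_def
  rcases le_or_gt α 0 with hα0 | hαpos
  · -- α = 0, hence w ≡ 0
    have hα_eq : α = 0 := le_antisymm hα0 (alphaW_nonneg G hw)
    have hw0 : ∀ i, w i = 0 := by
      intro i
      have hstab : IsStab G ({i} : Finset V) := by
        intro a ha b hb
        simp only [Finset.mem_singleton] at ha hb
        subst ha; subst hb
        exact fun h => G.irrefl h
      have h1 : w i ≤ α := by
        have h2 := le_alphaW (G := G) (w := w) hstab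
        simpa using h2
      have := hw i
      linarith
    refine ⟨0, Fin.elim0, Fin.elim0, fun j => j.elim0, fun j => j.elim0, ?_, ?_⟩
    · simp [hα_eq]
    · intro i
      simp [hw0 i]
  -- main case
  obtain ⟨Q, hQclq, hQpos, hQmeets⟩ := lemmaA G hperf w hw hαpos
  -- a positive maximum stable set exists
  have hSpos : ∃ Spos : Finset V, IsStab G Spos ∧ (∀ i ∈ Spos, 0 < w i) ∧
      ∑ i ∈ Spos, w i = α := by
    obtain ⟨S, hS, hsum⟩ := alphaW_mem G w
    refine ⟨S.filter (fun i => 0 < w i), ?_, fun i hi => (Finset.mem_filter.1 hi).2, ?_⟩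
    · intro i hi j hj
      exact hS i (Finset.mem_of_mem_filter _ hi) j (Finset.mem_of_mem_filter _ hj)
    · rw [← Finset.sum_filter_add_sum_filter_not S (fun i => 0 < w i)] at hsum
      have hzero : ∑ i ∈ S.filter (fun i => ¬ 0 < w i), w i = 0 := by
        refine Finset.sum_eq_zero fun i hi => ?_
        have h1 := (Finset.mem_filter.1 hi).2
        have h2 := hw i
        linarith
      rw [hzero, add_zero] at hsum
      exact hsum.symm
  obtain ⟨Spos, hSpos1, hSpos2, hSpos3⟩ := hSpos
  have hQne : Q.Nonempty := by
    obtain ⟨i, hi⟩ := hQmeets Spos hSpos1 hSpos2 hSpos3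
    exact ⟨i, (Finset.mem_inter.1 hi).2⟩
  -- minimum weight on Q
  have hQimne : (Q.image w).Nonempty := hQne.image w
  set m1 := (Q.image w).min' hQimne with hm1_def
  have hm1pos : 0 < m1 := by
    have hmem := Finset.min'_mem (Q.image w) hQimne
    simp only [Finset.mem_image] at hmem
    obtain ⟨i, hi, hwi⟩ := hmem
    rw [hm1_def, ← hwi]
    exact hQpos i hi
  have hm1le : ∀ i ∈ Q, m1 ≤ w i :=
    fun i hi => Finset.min'_le _ _ (Finset.mem_image_of_mem w hi)
  -- maximum weight of a stable set avoiding Q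
  set D := (Finset.univ.filter (fun S : Finset V => IsStab G S ∧ S ∩ Q = ∅)).image
    (fun S => ∑ i ∈ S, w i) with hD_def
  have hDne : D.Nonempty := by
    refine ⟨0, ?_⟩
    simp only [hD_def, Finset.mem_image]
    exact ⟨∅, by simp [isStab_empty], by simp⟩
  set M := D.max' hDne with hM_def
  have hM_ub : ∀ S : Finset V, IsStab G S → S ∩ Q = ∅ → ∑ i ∈ S, w i ≤ M := by
    intro S h1 h2
    refine Finset.le_max' _ _ ?_
    simp only [hD_def, Finset.mem_image]
    exact ⟨S, by simp only [Finset.mem_filter, Finset.mem_univ, true_and]; exact ⟨h1, h2⟩, rfl⟩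
  obtain ⟨SM, hSMmem, hSMsum⟩ : ∃ S : Finset V, (IsStab G S ∧ S ∩ Q = ∅) ∧ ∑ i ∈ S, w i = M := by
    have := Finset.max'_mem D hDne
    simp only [hD_def, Finset.mem_image] at this
    obtain ⟨S, hS, hsum⟩ := this
    simp only [Finset.mem_filter, Finset.mem_univ, true_and] at hS
    exact ⟨S, hS, hsum⟩
  have hMlt : M < α := by
    rcases lt_or_ge M α with h | h
    · exact h
    exfalso
    have hMα : ∑ i ∈ SM, w i = α := le_antisymm (le_alphaW hSMmem.1) (hSMsum.symm ▸ h)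
    -- positivize SM
    set SM' := SM.filter (fun i => 0 < w i) with hSM'_def
    have h1 : IsStab G SM' := fun i hi j hj =>
      hSMmem.1 i (Finset.mem_of_mem_filter _ hi) j (Finset.mem_of_mem_filter _ hj)
    have h2 : ∀ i ∈ SM', 0 < w i := fun i hi => (Finset.mem_filter.1 hi).2
    have h3 : ∑ i ∈ SM', w i = α := by
      rw [← Finset.sum_filter_add_sum_filter_not SM (fun i => 0 < w i)] at hMα
      have hzero : ∑ i ∈ SM.filter (fun i => ¬ 0 < w i), w i = 0 := by
        refine Finset.sum_eq_zero fun i hi => ?_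
        have ha := (Finset.mem_filter.1 hi).2
        have hb := hw i
        linarith
      rw [hzero, add_zero] at hMα
      exact hMα
    obtain ⟨i, hi⟩ := hQmeets SM' h1 h2 h3
    rw [Finset.mem_inter] at hi
    have : i ∈ SM ∩ Q := Finset.mem_inter.2 ⟨Finset.mem_of_mem_filter _ hi.1, hi.2⟩
    rw [hSMmem.2] at this
    exact Finset.notMem_empty i this
  set ε := min m1 (α - M) with hε_def
  have hεpos : 0 < ε := lt_min hm1pos (by linarith)
  have hεle1 : ε ≤ m1 := min_le_left _ _
  have hεle2 : ε ≤ α - M := min_le_right _ _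
  set w' : V → ℝ := fun i => if i ∈ Q then w i - ε else w i with hw'_def
  have hw'_nonneg : ∀ i, 0 ≤ w' i := by
    intro i
    rw [hw'_def]
    dsimp only
    split
    · have := hm1le i (by assumption)
      linarith
    · exact hw i
  have hw'_le : ∀ i, w' i ≤ w i := by
    intro i
    rw [hw'_def]
    dsimp only
    split <;> linarith
  -- sum formula
  have hsumQ : ∀ S : Finset V, ∑ i ∈ S, w' i = (∑ i ∈ S, w i) - ((S ∩ Q).card : ℝ) * ε := by
    intro S
    have h1 : ∀ i ∈ S, w' i = w i - (if i ∈ Q then ε else 0) := by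
      intro i _
      rw [hw'_def]
      dsimp only
      split <;> simp
    rw [Finset.sum_congr rfl h1, Finset.sum_sub_distrib]
    congr 1
    rw [Finset.sum_ite_mem, Finset.sum_const, nsmul_eq_mul]
  -- the new alpha
  have hub : ∀ S : Finset V, IsStab G S → ∑ i ∈ S, w' i ≤ α - ε := by
    intro S hS
    rw [hsumQ S]
    have hcard := stab_inter_clq_card_le hS hQclq
    rcases Nat.le_one_iff_eq_zero_or_eq_one.1 hcard with h | h
    · have hSQ : S ∩ Q = ∅ := Finset.card_eq_zero.1 h
      have := hM_ub S hS hSQ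
      rw [h]
      push_cast
      linarith
    · have := le_alphaW (G := G) (w := w) hS
      rw [h]
      push_cast
      linarith
  have halpha' : alphaW G w' = α - ε := by
    refine le_antisymm ?_ ?_
    · obtain ⟨S, hS, hsum⟩ := alphaW_mem G w'
      rw [hsum]
      exact hub S hS
    · have hcard1 : (Spos ∩ Q).card = 1 := by
        have hle := stab_inter_clq_card_le hSpos1 hQclq
        have hge : 1 ≤ (Spos ∩ Q).card :=
          Finset.card_pos.2 (hQmeets Spos hSpos1 hSpos2 hSpos3)
        omega
      have : ∑ i ∈ Spos, w' i = α - ε := by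
        rw [hsumQ Spos, hcard1, hSpos3]
        push_cast
        ring
      rw [← this]
      exact le_alphaW hSpos1
  -- monotonicity of the measure pieces
  have hsupp_sub : Finset.univ.filter (fun i => 0 < w' i) ⊆
      Finset.univ.filter (fun i => 0 < w i) := by
    intro i hi
    simp only [Finset.mem_filter, Finset.mem_univ, true_and] at hi ⊢
    have := hw'_le i
    linarith
  have hnonmax_sub : Finset.univ.filter (fun S : Finset V => IsStab G S ∧
        ∑ i ∈ S, w' i < alphaW G w') ⊆
      Finset.univ.filter (fun S : Finset V => IsStab G S ∧ ∑ i ∈ S, w i < α) := by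
    intro S hS
    simp only [Finset.mem_filter, Finset.mem_univ, true_and, halpha'] at hS ⊢
    refine ⟨hS.1, ?_⟩
    have h2 := hS.2
    have h3 := hsumQ S
    have hcard := stab_inter_clq_card_le hS.1 hQclq
    have : ((S ∩ Q).card : ℝ) ≤ 1 := by exact_mod_cast hcard
    nlinarith [hεpos]
  -- measure decreases strictly
  have hmeas : (Finset.univ.filter (fun i => 0 < w' i)).card * (N + 1) +
      (Finset.univ.filter (fun S : Finset V => IsStab G S ∧
        ∑ i ∈ S, w' i < alphaW G w')).card < m := by
    have hNbound : ∀ (F : Finset (Finset V)), F.card ≤ N := by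
      intro F
      rw [hN_def]
      calc F.card ≤ Fintype.card (Finset V) := Finset.card_le_univ F
        _ = 2 ^ (Fintype.card V) := Fintype.card_finset
    by_cases hsupp : Finset.univ.filter (fun i => 0 < w' i) =
        Finset.univ.filter (fun i => 0 < w i)
    · -- support unchanged: then ε = α - M and SM leaves the non-maximum family
      have hεM : ε = α - M := by
        rcases lt_or_ge ε (α - M) with h | h
        · exfalso
          -- then ε = m1; the vertex attaining the minimum dies
          have hεm1 : ε = m1 := by
            rcases min_cases m1 (α - M) with ⟨h1, _⟩ | ⟨h1, _⟩
            · rw [hε_def, h1]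
            · exfalso
              rw [hε_def, h1] at h
              exact lt_irrefl _ h
          obtain ⟨i0, hi0Q, hwi0⟩ : ∃ i0 ∈ Q, w i0 = m1 := by
            have := Finset.min'_mem (Q.image w) hQimne
            simp only [Finset.mem_image] at this
            obtain ⟨i, hi, hwi⟩ := this
            exact ⟨i, hi, hwi.symm ▸ rfl⟩
          have h1 : w' i0 = 0 := by
            rw [hw'_def]
            dsimp only
            rw [if_pos hi0Q, hwi0, hεm1]
            ring
          have h2 : i0 ∈ Finset.univ.filter (fun i => 0 < w i) := by
            simp only [Finset.mem_filter, Finset.mem_univ, true_and]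
            exact hQpos i0 hi0Q
          rw [← hsupp] at h2
          simp only [Finset.mem_filter, Finset.mem_univ, true_and] at h2
          rw [h1] at h2
          exact lt_irrefl 0 h2
        · exact le_antisymm hεle2 h
      -- SM is non-maximum for w but maximum for w'
      have hSM_in : SM ∈ Finset.univ.filter (fun S : Finset V => IsStab G S ∧
          ∑ i ∈ S, w i < α) := by
        simp only [Finset.mem_filter, Finset.mem_univ, true_and]
        exact ⟨hSMmem.1, by rw [hSMsum]; exact hMlt⟩
      have hSM_out : SM ∉ Finset.univ.filter (fun S : Finset V => IsStab G S ∧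
          ∑ i ∈ S, w' i < alphaW G w') := by
        simp only [Finset.mem_filter, Finset.mem_univ, true_and, halpha', not_and]
        intro _
        rw [hsumQ SM, hSMmem.2]
        simp only [Finset.card_empty, Nat.cast_zero, zero_mul, sub_zero]
        rw [hSMsum, hεM]
        simp [not_lt]
      have hssub : Finset.univ.filter (fun S : Finset V => IsStab G S ∧
            ∑ i ∈ S, w' i < alphaW G w') ⊂
          Finset.univ.filter (fun S : Finset V => IsStab G S ∧ ∑ i ∈ S, w i < α) :=
        Finset.ssubset_iff_of_subset hnonmax_sub |>.2 ⟨SM, hSM_in, hSM_out⟩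
      have hcardlt := Finset.card_lt_card hssub
      have hsupp_eq : (Finset.univ.filter (fun i => 0 < w' i)).card * (N + 1)
          = (Finset.univ.filter (fun i => 0 < w i)).card * (N + 1) := by
        rw [hsupp]
      omega
    · -- support strictly decreases
      have hssub : Finset.univ.filter (fun i => 0 < w' i) ⊂
          Finset.univ.filter (fun i => 0 < w i) :=
        lt_of_le_of_ne hsupp_sub hsupp
      have hcardlt := Finset.card_lt_card hssub
      have hb := hNbound (Finset.univ.filter (fun S : Finset V => IsStab G S ∧
        ∑ i ∈ S, w' i < alphaW G w'))
      have hb2 := hNbound (Finset.univ.filter (fun S : Finset V => IsStab G S ∧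
        ∑ i ∈ S, w i < α))
      -- (a-1)(N+1) + N < a(N+1)
      have ha : 1 ≤ (Finset.univ.filter (fun i => 0 < w i)).card := by omega
      nlinarith [hμ, hcardlt, hb, hb2, ha]
  -- apply induction hypothesis
  obtain ⟨k, Qs, ys, hQs, hys, hsum', hcov'⟩ := ih _ hmeas w' hw'_nonneg le_rfl
  refine ⟨k + 1, Fin.cons Q Qs, Fin.cons ε ys, ?_, ?_, ?_, ?_⟩
  · intro j
    refine Fin.cases ?_ ?_ j
    · simpa using hQclq
    · intro j'
      simpa using hQs j'
  · intro j
    refine Fin.cases ?_ ?_ j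
    · simpa using hεpos.le
    · intro j'
      simpa using hys j'
  · rw [Fin.sum_univ_succ]
    simp only [Fin.cons_zero, Fin.cons_succ]
    rw [hsum', halpha']
    ring
  · intro i
    rw [Finset.sum_filter, Fin.sum_univ_succ]
    simp only [Fin.cons_zero, Fin.cons_succ]
    rw [← Finset.sum_filter, hcov' i]
    by_cases hiQ : i ∈ Q
    · rw [if_pos hiQ, hw'_def]
      dsimp only
      rw [if_pos hiQ]
      ring
    · rw [if_neg hiQ, hw'_def]
      dsimp only
      rw [if_neg hiQ]
      ring

end Key
section Part1

variable {V : Type*} [Fintype V] [DecidableEq V]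

/-- **Key lemma**: in a perfect graph, every nonnegative weight function admits an exact
fractional clique cover of total weight `alphaW`. -/
lemma keyLemma (G : SimpleGraph V) (hperf : IsPerfect G) (w : V → ℝ) (hw : ∀ v, 0 ≤ w v) :
    ∃ (k : ℕ) (Q : Fin k → Finset V) (y : Fin k → ℝ),
      (∀ j, IsClq G (Q j)) ∧ (∀ j, 0 ≤ y j) ∧
      (∑ j, y j = alphaW G w) ∧
      (∀ i : V, ∑ j ∈ Finset.univ.filter (fun j => i ∈ Q j), y j = w i) := by
  classical
  exact keyLemma' G hperf _ w hw le_rfl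

theorem part1 (G : SimpleGraph V) (hperf : IsPerfect G)
    (w : V → ℝ) (W : V → V → ℝ) (hw : ∀ v, 0 ≤ w v)
    (hWs : ∀ i j, W i j = W j i)
    (hW : ∀ i j, G.Adj i j → max (w i) (w j) ≤ W i j) :
    InHandelman (cliqueNumber' G) (C (alphaW G w) - pGW G w W) := by
  classical
  set e : V → ℕ := fun v => ((Fintype.equivFin V) v : ℕ) with he_def
  have he : Function.Injective e := by
    intro a b h
    exact (Fintype.equivFin V).injective (Fin.val_injective h)
  obtain ⟨k, Q, y, hclq, hy, hsum, hcov⟩ := keyLemma G hperf w hw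
  set EP := Finset.univ.filter (fun p : V × V => G.Adj p.1 p.2 ∧ e p.1 < e p.2) with hEP_def
  set Bco : V × V → ℝ := fun p => ∑ j ∈ Finset.univ.filter (fun j => p.1 ∈ Q j ∧ p.2 ∈ Q j), y j
    with hBco_def
  -- (S1) halving
  have hS1 : C (2⁻¹ : ℝ) * ∑ q ∈ Finset.univ.filter (fun q : V × V => G.Adj q.1 q.2),
        C (W q.1 q.2) * (X q.1 * X q.2)
      = ∑ p ∈ EP, C (W p.1 p.2) * (X p.1 * X p.2) := by
    have hsplit : Finset.univ.filter (fun q : V × V => G.Adj q.1 q.2)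
        = EP ∪ Finset.univ.filter (fun q : V × V => G.Adj q.1 q.2 ∧ e q.2 < e q.1) := by
      ext p
      simp only [hEP_def, Finset.mem_union, Finset.mem_filter, Finset.mem_univ, true_and]
      constructor
      · intro h
        have hne : e p.1 ≠ e p.2 := fun hh => h.ne (he hh)
        rcases lt_or_gt_of_ne hne with h' | h'
        · exact Or.inl ⟨h, h'⟩
        · exact Or.inr ⟨h, h'⟩
      · rintro (⟨h, _⟩ | ⟨h, _⟩) <;> exact h
    have hdisj : Disjoint EP (Finset.univ.filter (fun q : V × V => G.Adj q.1 q.2 ∧ e q.2 < e q.1)) := by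
      rw [Finset.disjoint_left]
      intro p hp hp'
      simp only [hEP_def, Finset.mem_filter] at hp hp'
      omega
    have hswap : ∑ q ∈ Finset.univ.filter (fun q : V × V => G.Adj q.1 q.2 ∧ e q.2 < e q.1),
          C (W q.1 q.2) * (X q.1 * X q.2)
        = ∑ p ∈ EP, C (W p.1 p.2) * (X p.1 * X p.2) := by
      refine Finset.sum_nbij' (fun p => Prod.swap p) (fun p => Prod.swap p) ?_ ?_ ?_ ?_ ?_
      · intro p hp
        simp only [hEP_def, Finset.mem_filter, Finset.mem_univ, true_and] at hp ⊢
        exact ⟨hp.1.symm, hp.2⟩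
      · intro p hp
        simp only [hEP_def, Finset.mem_filter, Finset.mem_univ, true_and] at hp ⊢
        exact ⟨hp.1.symm, hp.2⟩
      · intro p _; simp
      · intro p _; simp
      · intro p _
        simp only [Prod.fst_swap, Prod.snd_swap]
        rw [hWs p.2 p.1]
        ring
    rw [hsplit, Finset.sum_union hdisj, hswap]
    rw [← two_mul, ← mul_assoc]
    have h2 : (2 : MvPolynomial V ℝ) = C (2 : ℝ) := (map_ofNat C 2).symm
    rw [h2, ← map_mul]
    norm_num
  -- (S2) linear part
  have hS2 : ∑ j, C (y j) * (∑ i ∈ Q j, (X i : MvPolynomial V ℝ))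
      = ∑ i, C (w i) * (X i : MvPolynomial V ℝ) := by
    have h1 : ∀ j : Fin k, C (y j) * (∑ i ∈ Q j, (X i : MvPolynomial V ℝ))
        = ∑ i, (if i ∈ Q j then C (y j) * X i else 0) := by
      intro j
      rw [Finset.mul_sum, Finset.sum_ite_mem, Finset.univ_inter]
    rw [Finset.sum_congr rfl (fun j _ => h1 j), Finset.sum_comm]
    refine Finset.sum_congr rfl fun i _ => ?_
    rw [← Finset.sum_filter, ← Finset.sum_mul, ← map_sum, hcov i]
  -- (S3) quadratic part
  have hpairs : ∀ j : Fin k, ((Q j) ×ˢ (Q j)).filter (fun p => e p.1 < e p.2)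
      = EP.filter (fun p => p.1 ∈ Q j ∧ p.2 ∈ Q j) := by
    intro j
    ext p
    simp only [hEP_def, Finset.mem_filter, Finset.mem_product, Finset.mem_univ, true_and]
    constructor
    · rintro ⟨⟨h1, h2⟩, hlt⟩
      have hne : p.1 ≠ p.2 := fun hh => by rw [hh] at hlt; exact lt_irrefl _ hlt
      exact ⟨⟨hclq j p.1 h1 p.2 h2 hne, hlt⟩, h1, h2⟩
    · rintro ⟨⟨_, hlt⟩, h1, h2⟩
      exact ⟨⟨h1, h2⟩, hlt⟩
  have hS3 : ∑ j, C (y j) * (∑ p ∈ ((Q j) ×ˢ (Q j)).filter (fun p => e p.1 < e p.2),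
        (X p.1 * X p.2 : MvPolynomial V ℝ))
      = ∑ p ∈ EP, C (Bco p) * (X p.1 * X p.2 : MvPolynomial V ℝ) := by
    have h1 : ∀ j : Fin k, C (y j) * (∑ p ∈ ((Q j) ×ˢ (Q j)).filter (fun p => e p.1 < e p.2),
          (X p.1 * X p.2 : MvPolynomial V ℝ))
        = ∑ p ∈ EP, (if p.1 ∈ Q j ∧ p.2 ∈ Q j then C (y j) * (X p.1 * X p.2) else 0) := by
      intro j
      rw [hpairs j, Finset.mul_sum, Finset.sum_filter]
    rw [Finset.sum_congr rfl (fun j _ => h1 j), Finset.sum_comm]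
    refine Finset.sum_congr rfl fun p _ => ?_
    rw [← Finset.sum_filter, ← Finset.sum_mul, ← map_sum]
  -- constant part
  have hCa : (C (alphaW G w) : MvPolynomial V ℝ) = ∑ j, C (y j) := by
    rw [← map_sum, hsum]
  -- subtraction inside the EP sum
  have hsub : ∑ p ∈ EP, C (W p.1 p.2 - Bco p) * (X p.1 * X p.2 : MvPolynomial V ℝ)
      = (∑ p ∈ EP, C (W p.1 p.2) * (X p.1 * X p.2))
        - ∑ p ∈ EP, C (Bco p) * (X p.1 * X p.2) := by
    rw [← Finset.sum_sub_distrib]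
    refine Finset.sum_congr rfl fun p _ => ?_
    rw [map_sub]
    ring
  -- expanding the clique polynomials
  have hexp : ∑ j, C (y j) * ((C 1 : MvPolynomial V ℝ) - (∑ i ∈ Q j, X i) +
        ∑ p ∈ ((Q j) ×ˢ (Q j)).filter (fun p => e p.1 < e p.2), X p.1 * X p.2)
      = (∑ j, C (y j) * (C 1 : MvPolynomial V ℝ))
        - (∑ j, C (y j) * (∑ i ∈ Q j, (X i : MvPolynomial V ℝ)))
        + ∑ j, C (y j) * (∑ p ∈ ((Q j) ×ˢ (Q j)).filter (fun p => e p.1 < e p.2),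
            (X p.1 * X p.2 : MvPolynomial V ℝ)) := by
    have hh : ∀ j ∈ (Finset.univ : Finset (Fin k)),
        C (y j) * ((C 1 : MvPolynomial V ℝ) - (∑ i ∈ Q j, X i) +
          ∑ p ∈ ((Q j) ×ˢ (Q j)).filter (fun p => e p.1 < e p.2), X p.1 * X p.2)
        = C (y j) * (C 1 : MvPolynomial V ℝ)
          - C (y j) * (∑ i ∈ Q j, (X i : MvPolynomial V ℝ))
          + C (y j) * (∑ p ∈ ((Q j) ×ˢ (Q j)).filter (fun p => e p.1 < e p.2),
              (X p.1 * X p.2 : MvPolynomial V ℝ)) := fun j _ => by ring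
    rw [Finset.sum_congr rfl hh, Finset.sum_add_distrib, Finset.sum_sub_distrib]
  have hone : ∑ j, C (y j) * (C 1 : MvPolynomial V ℝ) = ∑ j, (C (y j) : MvPolynomial V ℝ) := by
    refine Finset.sum_congr rfl fun j _ => ?_
    rw [map_one, mul_one]
  -- the main identity
  have hident : C (alphaW G w) - pGW G w W
      = (∑ j, C (y j) * ((C 1 : MvPolynomial V ℝ) - (∑ i ∈ Q j, X i) +
          ∑ p ∈ ((Q j) ×ˢ (Q j)).filter (fun p => e p.1 < e p.2), X p.1 * X p.2))
        + ∑ p ∈ EP, C (W p.1 p.2 - Bco p) * (X p.1 * X p.2) := by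
    rw [pGW, hexp, hone, hsub]
    linear_combination hS1 + hS2 - hS3 + hCa
  rw [hident]
  refine inH_add (inH_sum _ _ fun j _ => inH_smul (hy j) ?_) (inH_sum _ _ fun p hp => ?_)
  · exact gQ_inH e he (G := G) (Q j) ((hclq j).card_le)
  · simp only [hEP_def, Finset.mem_filter, Finset.mem_univ, true_and] at hp
    obtain ⟨hadj, hlt⟩ := hp
    have hne : p.1 ≠ p.2 := hadj.ne
    -- nonnegativity of the coefficient
    have hnn : 0 ≤ W p.1 p.2 - Bco p := by
      have h1 : Bco p ≤ ∑ j ∈ Finset.univ.filter (fun j => p.1 ∈ Q j), y j := by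
        refine Finset.sum_le_sum_of_subset_of_nonneg ?_ (fun j _ _ => hy j)
        exact Finset.monotone_filter_right _ (fun j _ hj => hj.1)
      have h2 := hcov p.1
      have h3 := hW p.1 p.2 hadj
      have h4 : w p.1 ≤ max (w p.1) (w p.2) := le_max_left _ _
      simp only [hBco_def]
      linarith [h1, h2.le, h3, h4]
    -- the term is a Handelman term
    have hterm : (X p.1 * X p.2 : MvPolynomial V ℝ)
        = handTerm ({p.1, p.2} : Finset V) ({p.1, p.2} : Finset V) := by
      rw [handTerm, Finset.sdiff_self, Finset.prod_empty, mul_one,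
        Finset.prod_insert (by simp [hne]), Finset.prod_singleton]
    rw [hterm]
    refine inH_smul hnn (inH_term ?_ (le_refl _))
    have hclq2 : IsClq G ({p.1, p.2} : Finset V) := by
      intro a ha b hb hab
      simp only [Finset.mem_insert, Finset.mem_singleton] at ha hb
      rcases ha with rfl | rfl <;> rcases hb with rfl | rfl
      · exact absurd rfl hab
      · exact hadj
      · exact hadj.symm
      · exact absurd rfl hab
    exact hclq2.card_le

end Part1
section Part2

variable {V : Type*} [Fintype V] [DecidableEq V]

lemma IsClq.map_iso {W : Type*} [DecidableEq W] {G : SimpleGraph V} {H : SimpleGraph W}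
    (e : G ≃g H) {K : Finset V} (h : IsClq G K) : IsClq H (K.image e) := by
  intro i hi j hj hne
  simp only [Finset.mem_image] at hi hj
  obtain ⟨a, ha, rfl⟩ := hi
  obtain ⟨b, hb, rfl⟩ := hj
  have hab : a ≠ b := fun hh => hne (by rw [hh])
  exact e.map_adj_iff.2 (h a ha b hb hab)

lemma card_image_iso {W : Type*} [DecidableEq W] {G : SimpleGraph V} {H : SimpleGraph W}
    (e : G ≃g H) (K : Finset V) : (K.image e).card = K.card :=
  Finset.card_image_of_injective _ (EquivLike.injective e)

/-- `G` is colorable with `ω(G)` colors when perfect. -/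
lemma colorable_of_perfect (G : SimpleGraph V) (hperf : IsPerfect G) :
    G.Colorable (cliqueNumber' G) := by
  classical
  have hiso : G.induce (↑(Finset.univ : Finset V) : Set V) ≃g G := by
    rw [Finset.coe_univ]
    exact G.induceUnivIso
  have hcol : (G.induce (↑(Finset.univ : Finset V) : Set V)).Colorable
      (cliqueNumber' (G.induce (↑(Finset.univ : Finset V) : Set V))) :=
    SimpleGraph.chromaticNumber_le_iff_colorable.mp (le_of_eq (hperf Finset.univ))
  obtain ⟨col⟩ := hcol
  have hle : cliqueNumber' (G.induce (↑(Finset.univ : Finset V) : Set V))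
      ≤ cliqueNumber' G := by
    obtain ⟨K, hK, hKcard⟩ := exists_clique_card_eq (G.induce (↑(Finset.univ : Finset V) : Set V))
    have h1 := (IsClq.map_iso hiso (K := K) hK).card_le
    rwa [card_image_iso, hKcard] at h1
  refine SimpleGraph.Colorable.mono hle ?_
  exact ⟨col.comp hiso.symm.toHom⟩

/-- vertex-transitivity implies `|Q| * |S| ≤ n` for cliques `Q` and stable sets `S` -/
lemma trans_count (G : SimpleGraph V) (htrans : ∀ u v : V, ∃ e : G ≃g G, e u = v)
    [hne : Nonempty V] {Q S : Finset V} (hQ : IsClq G Q) (hS : IsStab G S) :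
    Q.card * S.card ≤ Fintype.card V := by
  classical
  haveI : Fintype (G ≃g G) :=
    Fintype.ofInjective (fun e => (e : V → V)) (fun a b h => DFunLike.coe_injective h)
  obtain ⟨q0⟩ := hne
  set k := (Finset.univ.filter (fun g : G ≃g G => g q0 = q0)).card with hk_def
  -- all fibers have the same size
  have hfiber : ∀ q s : V, (Finset.univ.filter (fun g : G ≃g G => g q = s)).card = k := by
    intro q s
    obtain ⟨e1, he1⟩ := htrans q0 q
    obtain ⟨e2, he2⟩ := htrans q0 s
    rw [hk_def]
    refine Finset.card_bij' (fun g _ => (e1.trans g).trans e2.symm)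
      (fun g _ => (e1.symm.trans g).trans e2) ?_ ?_ ?_ ?_
    · intro g hg
      simp only [Finset.mem_filter, Finset.mem_univ, true_and] at hg ⊢
      rw [RelIso.trans_apply, RelIso.trans_apply, he1, hg, ← he2]
      exact e2.symm_apply_apply q0
    · intro g hg
      simp only [Finset.mem_filter, Finset.mem_univ, true_and] at hg ⊢
      rw [RelIso.trans_apply, RelIso.trans_apply,
        show e1.symm q = q0 by rw [← he1]; exact e1.symm_apply_apply q0, hg, he2]
    · intro g _
      refine DFunLike.ext _ _ fun x => ?_
      simp [RelIso.trans_apply]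
    · intro g _
      refine DFunLike.ext _ _ fun x => ?_
      simp [RelIso.trans_apply]
  have hk1 : 0 < k := by
    rw [hk_def]
    refine Finset.card_pos.2 ⟨RelIso.refl _, ?_⟩
    simp only [Finset.mem_filter, Finset.mem_univ, true_and]
    rfl
  -- total count of the automorphism group
  have hAut : Fintype.card (G ≃g G) = Fintype.card V * k := by
    have h1 : (Finset.univ : Finset (G ≃g G)).card
        = ∑ s : V, (Finset.univ.filter (fun g : G ≃g G => g q0 = s)).card :=
      Finset.card_eq_sum_card_fiberwise (fun g _ => Finset.mem_univ _)
    rw [← Finset.card_univ, h1, Finset.sum_congr rfl (fun s _ => hfiber q0 s),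
      Finset.sum_const, smul_eq_mul, Finset.card_univ]
  -- double counting
  have hcount : ∑ g : G ≃g G, ((Q.image g) ∩ S).card = Q.card * (S.card * k) := by
    have h1 : ∀ g : G ≃g G, ((Q.image g) ∩ S).card
        = ∑ q ∈ Q, (if g q ∈ S then 1 else 0) := by
      intro g
      have him : (Q.image g) ∩ S = (Q.filter (fun q => g q ∈ S)).image g := by
        ext z
        simp only [Finset.mem_inter, Finset.mem_image, Finset.mem_filter]
        constructor
        · rintro ⟨⟨q, hq, rfl⟩, hz⟩
          exact ⟨q, ⟨hq, hz⟩, rfl⟩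
        · rintro ⟨q, ⟨hq, hz⟩, rfl⟩
          exact ⟨⟨q, hq, rfl⟩, hz⟩
      rw [him, Finset.card_image_of_injective _ (EquivLike.injective g)]
      exact Finset.card_filter _ _
    rw [Finset.sum_congr rfl (fun g _ => h1 g), Finset.sum_comm]
    have h3 : ∀ q ∈ Q, ∑ g : G ≃g G, (if g q ∈ S then 1 else 0) = S.card * k := by
      intro q _
      have h4 : ∑ g : G ≃g G, (if g q ∈ S then 1 else 0)
          = (Finset.univ.filter (fun g : G ≃g G => g q ∈ S)).card :=
        (Finset.card_filter _ _).symm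
      have h5 : (Finset.univ.filter (fun g : G ≃g G => g q ∈ S)).card
          = ∑ s ∈ S, ((Finset.univ.filter (fun g : G ≃g G => g q ∈ S)).filter
              (fun g => g q = s)).card :=
        Finset.card_eq_sum_card_fiberwise (fun g hg => by
          simp only [Finset.mem_coe, Finset.mem_filter, Finset.mem_univ, true_and] at hg
          exact hg)
      have h6 : ∀ s ∈ S, ((Finset.univ.filter (fun g : G ≃g G => g q ∈ S)).filter
          (fun g => g q = s)) = Finset.univ.filter (fun g : G ≃g G => g q = s) := by
        intro s hs
        ext g
        simp only [Finset.mem_filter, Finset.mem_univ, true_and]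
        constructor
        · rintro ⟨-, h2⟩
          exact h2
        · intro h
          exact ⟨by rw [h]; exact hs, h⟩
      rw [h4, h5, Finset.sum_congr rfl (fun s hs => by rw [h6 s hs, hfiber q s]),
        Finset.sum_const, smul_eq_mul]
    rw [Finset.sum_congr rfl h3, Finset.sum_const, smul_eq_mul]
  have hbound : ∑ g : G ≃g G, ((Q.image g) ∩ S).card ≤ Fintype.card (G ≃g G) := by
    have h1 : ∀ g : G ≃g G, ((Q.image g) ∩ S).card ≤ 1 := by
      intro g
      rw [Finset.inter_comm]
      exact stab_inter_clq_card_le hS (IsClq.map_iso (e := g) hQ)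
    calc ∑ g : G ≃g G, ((Q.image g) ∩ S).card ≤ ∑ _g : G ≃g G, 1 :=
          Finset.sum_le_sum (fun g _ => h1 g)
      _ = Fintype.card (G ≃g G) := by rw [Finset.sum_const, smul_eq_mul, mul_one,
          Finset.card_univ]
  rw [hcount, hAut] at hbound
  rw [← mul_assoc] at hbound
  exact Nat.le_of_mul_le_mul_right hbound hk1

end Part2
section Final

variable {V : Type*} [Fintype V] [DecidableEq V]

open Classical in
lemma eval_fpoly (G : SimpleGraph V) (w : V → ℝ) (W : V → V → ℝ) (x : V → ℝ) :
    MvPolynomial.eval x (C (alphaW G w) - pGW G w W)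
      = alphaW G w - (∑ i, w i * x i)
        + 2⁻¹ * ∑ q ∈ Finset.univ.filter (fun q : V × V => G.Adj q.1 q.2),
            W q.1 q.2 * (x q.1 * x q.2) := by
  rw [pGW]
  simp only [map_sub, map_add, map_mul, map_sum, eval_C, eval_X]
  ring

lemma eval_handTerm (x : V → ℝ) (T I : Finset V) :
    MvPolynomial.eval x (handTerm T I) = (∏ i ∈ I, x i) * ∏ j ∈ T \ I, (1 - x j) := by
  rw [handTerm]
  simp only [map_mul, map_prod, map_sub, eval_X, map_one]

end Final

/-- If `G` is perfect, with node weights `w ≥ 0` and edge weights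
`w_{ij} ≥ max(w_i,w_j)`, then `rk_H(G,w) ≤ ω(G)`, i.e. `f_{G,w} ∈ H_{ω(G)}`.  Moreover, in
the unweighted case (`w ≡ 1`, edge weights `1`), if `G` is also vertex-transitive then
`rk_H(G) = ω(G)`, where the Handelman rank is the least `t` with `f_G ∈ H_t`. -/
theorem perfect_handelman_rank {V : Type*} [Fintype V] [DecidableEq V]
    (G : SimpleGraph V) (hperf : IsPerfect G)
    (w : V → ℝ) (W : V → V → ℝ) (hw : ∀ v, 0 ≤ w v)
    (hWs : ∀ i j, W i j = W j i)
    (hW : ∀ i j, G.Adj i j → max (w i) (w j) ≤ W i j) :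
    InHandelman (cliqueNumber' G) (C (alphaW G w) - pGW G w W) ∧
    ((∀ v, w v = 1) → (∀ i j, G.Adj i j → W i j = 1) →
      (∀ u v : V, ∃ e : G ≃g G, e u = v) →
      sInf {t : ℕ | InHandelman t (C (alphaW G w) - pGW G w W)} = cliqueNumber' G) := by
  classical
  have hmem : InHandelman (cliqueNumber' G) (C (alphaW G w) - pGW G w W) :=
    part1 G hperf w W hw hWs hW
  refine ⟨hmem, fun hw1 hW1 htrans => ?_⟩
  refine le_antisymm (Nat.sInf_le hmem) (le_csInf ⟨_, hmem⟩ ?_)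
  intro t htmem
  by_contra hlt
  push_neg at hlt
  -- `hlt : t < cliqueNumber' G`
  obtain ⟨Qm, hQm, hQmcard⟩ := exists_clique_card_eq G
  have hQm_ne : Qm.Nonempty := by
    rw [← Finset.card_pos, hQmcard]
    omega
  obtain ⟨v0, hv0⟩ := hQm_ne
  haveI : Nonempty V := ⟨v0⟩
  have hsum_card : ∀ S : Finset V, ∑ i ∈ S, w i = (S.card : ℝ) := by
    intro S
    rw [Finset.sum_congr rfl (fun i _ => hw1 i), Finset.sum_const, nsmul_eq_mul, mul_one]
  obtain ⟨Smax, hSmax, hSmax_sum⟩ := alphaW_mem G w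
  have hαa : alphaW G w = (Smax.card : ℝ) := by rw [hSmax_sum, hsum_card]
  have ha_ub : ∀ S : Finset V, IsStab G S → S.card ≤ Smax.card := by
    intro S hS
    have h1 := le_alphaW (G := G) (w := w) hS
    rw [hsum_card, hαa] at h1
    exact_mod_cast h1
  have ha1 : 1 ≤ Smax.card := by
    have hstab : IsStab G ({v0} : Finset V) := by
      intro i hi j hj
      simp only [Finset.mem_singleton] at hi hj
      subst hi; subst hj
      exact fun h => G.irrefl h
    have := ha_ub {v0} hstab
    simpa using this
  -- coloring with ω colors; all color classes are maximum stable sets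
  obtain ⟨col⟩ := colorable_of_perfect G hperf
  set Scl : Fin (cliqueNumber' G) → Finset V :=
    fun c0 => Finset.univ.filter (fun v => col v = c0) with hScl_def
  have hScl_stab : ∀ c0, IsStab G (Scl c0) := by
    intro c0 i hi j hj hadj
    simp only [hScl_def, Finset.mem_filter, Finset.mem_univ, true_and] at hi hj
    exact col.valid hadj (hi.trans hj.symm)
  have hScl_card : ∀ c0, (Scl c0).card = Smax.card := by
    have htc : cliqueNumber' G * Smax.card ≤ Fintype.card V := by
      have := trans_count G htrans hQm hSmax
      rwa [hQmcard] at this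
    have hn_eq : ∑ c0 : Fin (cliqueNumber' G), (Scl c0).card = Fintype.card V := by
      rw [hScl_def, ← Finset.card_univ (α := V)]
      exact (Finset.card_eq_sum_card_fiberwise (fun v _ => Finset.mem_univ (col v))).symm
    intro c0
    by_contra hne'
    have hlt' : (Scl c0).card < Smax.card :=
      lt_of_le_of_ne (ha_ub _ (hScl_stab c0)) hne'
    have : ∑ c1 : Fin (cliqueNumber' G), (Scl c1).card
        < ∑ _c1 : Fin (cliqueNumber' G), Smax.card :=
      Finset.sum_lt_sum (fun c1 _ => ha_ub _ (hScl_stab c1)) ⟨c0, Finset.mem_univ _, hlt'⟩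
    rw [hn_eq, Finset.sum_const, smul_eq_mul, Finset.card_univ, Fintype.card_fin] at this
    omega
  -- the Handelman certificate
  obtain ⟨c, hc0, hceq⟩ := htmem
  -- evaluation of the identity at a 0/1 point
  have heval : ∀ x : V → ℝ,
      MvPolynomial.eval x (C (alphaW G w) - pGW G w W)
        = ∑ T ∈ Finset.univ.filter (fun T : Finset V => T.card ≤ t),
            ∑ I ∈ T.powerset, (c T I) * ((∏ i ∈ I, x i) * ∏ j ∈ T \ I, (1 - x j)) := by
    intro x
    rw [hceq]
    rw [map_sum]
    refine Finset.sum_congr rfl fun T _ => ?_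
    rw [map_sum]
    refine Finset.sum_congr rfl fun I _ => ?_
    rw [map_mul, eval_C, eval_handTerm]
  -- the coefficients c T ∅ all vanish
  have hkill : ∀ T : Finset V, T.card ≤ t → c T ∅ = 0 := by
    intro T hT
    -- find a color class disjoint from T
    have himcard : (T.image col).card < cliqueNumber' G :=
      lt_of_le_of_lt (le_trans (Finset.card_image_le) hT) hlt
    have hc0ex : ∃ c0 : Fin (cliqueNumber' G), c0 ∉ T.image col := by
      by_contra hall
      push_neg at hall
      have : (Finset.univ : Finset (Fin (cliqueNumber' G))) ⊆ T.image col :=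
        fun c0 _ => hall c0
      have := Finset.card_le_card this
      rw [Finset.card_univ, Fintype.card_fin] at this
      omega
    obtain ⟨c0, hc0n⟩ := hc0ex
    have hdisj : ∀ v ∈ T, v ∉ Scl c0 := by
      intro v hv hvS
      simp only [hScl_def, Finset.mem_filter, Finset.mem_univ, true_and] at hvS
      exact hc0n (Finset.mem_image.2 ⟨v, hv, hvS⟩)
    set x : V → ℝ := fun v => if v ∈ Scl c0 then 1 else 0 with hx_def
    have hx01 : ∀ v, x v = 0 ∨ x v = 1 := by
      intro v
      rw [hx_def]
      dsimp only
      split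
      · exact Or.inr rfl
      · exact Or.inl rfl
    -- the polynomial vanishes at x
    have hfx : MvPolynomial.eval x (C (alphaW G w) - pGW G w W) = 0 := by
      rw [eval_fpoly]
      have hlin : ∑ i, w i * x i = (Smax.card : ℝ) := by
        have h1 : ∀ i : V, w i * x i = if i ∈ Scl c0 then 1 else 0 := by
          intro i
          rw [hw1 i, hx_def, one_mul]
        rw [Finset.sum_congr rfl (fun i _ => h1 i), Finset.sum_ite_mem, Finset.univ_inter,
          Finset.sum_const, nsmul_eq_mul, mul_one, hScl_card c0]
      have hquad : ∑ q ∈ Finset.univ.filter (fun q : V × V => G.Adj q.1 q.2),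
          W q.1 q.2 * (x q.1 * x q.2) = 0 := by
        refine Finset.sum_eq_zero fun q hq => ?_
        simp only [Finset.mem_filter, Finset.mem_univ, true_and] at hq
        have : x q.1 * x q.2 = 0 := by
          rw [hx_def]
          dsimp only
          by_cases h1 : q.1 ∈ Scl c0 <;> by_cases h2 : q.2 ∈ Scl c0
          · exact absurd hq (hScl_stab c0 q.1 h1 q.2 h2)
          · rw [if_neg h2, mul_zero]
          · rw [if_neg h1, zero_mul]
          · rw [if_neg h1, zero_mul]
        rw [this, mul_zero]
      rw [hlin, hquad, hαa]
      ring
    -- every term in the certificate is nonnegative at x; hence each vanishes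
    have hterm_nonneg : ∀ T' I' : Finset V,
        0 ≤ (c T' I') * ((∏ i ∈ I', x i) * ∏ j ∈ T' \ I', (1 - x j)) := by
      intro T' I'
      refine mul_nonneg (hc0 T' I') (mul_nonneg ?_ ?_)
      · refine Finset.prod_nonneg fun i _ => ?_
        rcases hx01 i with h | h <;> rw [h] <;> norm_num
      · refine Finset.prod_nonneg fun j _ => ?_
        rcases hx01 j with h | h <;> rw [h] <;> norm_num
    have hall0 : ∀ T' ∈ Finset.univ.filter (fun T' : Finset V => T'.card ≤ t),
        ∀ I' ∈ T'.powerset,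
        (c T' I') * ((∏ i ∈ I', x i) * ∏ j ∈ T' \ I', (1 - x j)) = 0 := by
      have hsum0 : ∑ T' ∈ Finset.univ.filter (fun T' : Finset V => T'.card ≤ t),
          ∑ I' ∈ T'.powerset,
            (c T' I') * ((∏ i ∈ I', x i) * ∏ j ∈ T' \ I', (1 - x j)) = 0 := by
        rw [← heval x, hfx]
      have houter := (Finset.sum_eq_zero_iff_of_nonneg
        (fun T' _ => Finset.sum_nonneg (fun I' _ => hterm_nonneg T' I'))).1 hsum0
      intro T' hT' I' hI'
      exact (Finset.sum_eq_zero_iff_of_nonneg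
        (fun I' _ => hterm_nonneg T' I')).1 (houter T' hT') I' hI'
    have hTmem : T ∈ Finset.univ.filter (fun T' : Finset V => T'.card ≤ t) := by
      simp only [Finset.mem_filter, Finset.mem_univ, true_and]
      exact hT
    have h0 := hall0 T hTmem ∅ (Finset.mem_powerset.2 (Finset.empty_subset T))
    have hprod1 : (∏ i ∈ (∅ : Finset V), x i) * ∏ j ∈ T \ ∅, (1 - x j) = 1 := by
      rw [Finset.prod_empty, one_mul, Finset.sdiff_empty]
      refine Finset.prod_eq_one fun j hj => ?_
      have : x j = 0 := by
        rw [hx_def]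
        dsimp only
        rw [if_neg (hdisj j hj)]
      rw [this, sub_zero]
    rw [hprod1, mul_one] at h0
    exact h0
  -- now evaluate at 0 to get a contradiction
  have hzero := heval (fun _ => 0)
  have hlhs : MvPolynomial.eval (fun _ => (0 : ℝ)) (C (alphaW G w) - pGW G w W)
      = (Smax.card : ℝ) := by
    rw [eval_fpoly]
    simp [hαa]
  have hrhs : ∑ T ∈ Finset.univ.filter (fun T : Finset V => T.card ≤ t),
      ∑ I ∈ T.powerset,
        (c T I) * ((∏ i ∈ I, (0 : ℝ)) * ∏ j ∈ T \ I, (1 - (0 : ℝ))) = 0 := by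
    refine Finset.sum_eq_zero fun T hT => ?_
    refine Finset.sum_eq_zero fun I hI => ?_
    rcases I.eq_empty_or_nonempty with rfl | hIne
    · simp only [Finset.mem_filter, Finset.mem_univ, true_and] at hT
      rw [hkill T hT, zero_mul]
    · obtain ⟨i, hi⟩ := hIne
      rw [Finset.prod_eq_zero hi rfl, zero_mul, mul_zero]
  rw [hlhs, hrhs] at hzero
  have : (1 : ℝ) ≤ (Smax.card : ℝ) := by exact_mod_cast ha1
  linarith
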